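/- arXiv:1306.0057 — 5 statements merged into one kernel-verified Lean document; each statement's English description precedes it below -/
import Mathlib

section
/- Let C = {x ∈ R^n : E_{γ_k} x ∈ C_k, k = 1,...,l} where the C_k are proper convex cones, the γ_k cover {1,...,n}, and there is x̄ with E_{γ_k} x̄ ∈ int C_k for all k. Then the dual cone of C equals the set of all sums ∑_{k=1}^l E_{γ_k}^T s̃_k with s̃_k ∈ C_k^*, where C_k^* is the dual cone of C_k. -/
/-- `E_γ` : extraction of the subvector of `x` indexed by `γ`. -/
def Eext {n : ℕ} (γ : Finset (Fin n)) (x : Fin n → ℝ) : {i // i ∈ γ} → ℝ :=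
  fun i => x i.1

/-- `E_γᵀ` : embedding of a `|γ|`-vector into `ℝⁿ` by zero-filling. -/
def Eemb {n : ℕ} (γ : Finset (Fin n)) (y : {i // i ∈ γ} → ℝ) : Fin n → ℝ :=
  fun i => if h : i ∈ γ then y ⟨i, h⟩ else 0

open Filter Topology Set

/-- Pairing identity between embedding and extraction. -/
lemma pair_emb {n : ℕ} (γ : Finset (Fin n)) (u : Fin n → ℝ) (y : {i // i ∈ γ} → ℝ) :
    ∑ i, u i * Eemb γ y i = ∑ i : {i // i ∈ γ}, u i.1 * y i := by
  rw [← Finset.sum_subset γ.subset_univ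
    (fun i _ hi => by simp [Eemb, dif_neg hi])]
  rw [← Finset.sum_attach γ (fun i => u i * Eemb γ y i)]
  rw [Finset.univ_eq_attach]
  exact Finset.sum_congr rfl fun i _ => by simp [Eemb]

/-- Linearity-type identities for `Eemb`. -/
lemma Eemb_add {n : ℕ} (γ : Finset (Fin n)) (y z : {i // i ∈ γ} → ℝ) :
    Eemb γ (y + z) = Eemb γ y + Eemb γ z := by
  funext i; by_cases h : i ∈ γ <;> simp [Eemb, h]

lemma Eemb_smul {n : ℕ} (γ : Finset (Fin n)) (c : ℝ) (y : {i // i ∈ γ} → ℝ) :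
    Eemb γ (c • y) = c • Eemb γ y := by
  funext i; by_cases h : i ∈ γ <;> simp [Eemb, h]

lemma Eemb_zero {n : ℕ} (γ : Finset (Fin n)) :
    Eemb γ (0 : {i // i ∈ γ} → ℝ) = 0 := by
  funext i; by_cases h : i ∈ γ <;> simp [Eemb, h]

lemma continuous_Eemb {n : ℕ} (γ : Finset (Fin n)) : Continuous (Eemb γ) := by
  apply continuous_pi
  intro i
  by_cases h : i ∈ γ
  · simpa [Eemb, h] using (continuous_apply (⟨i, h⟩ : {i // i ∈ γ}))
  · simpa [Eemb, h] using (continuous_const : Continuous fun _ : {i // i ∈ γ} → ℝ => (0:ℝ))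

/-- Euclidean inner product on `EuclideanSpace ℝ τ` equals the sum pairing. -/
lemma inner_eq_sum {τ : Type*} [Fintype τ] (x y : EuclideanSpace ℝ τ) :
    (inner ℝ x y : ℝ) = ∑ i, x i * y i := by
  simp [PiLp.inner_apply, RCLike.inner_apply, mul_comm]

/-- Hahn–Banach separation for a closed convex cone in a finite product of reals. -/
lemma sep {τ : Type*} [Fintype τ] (K : Set (τ → ℝ)) (hK0 : (0 : τ → ℝ) ∈ K)
    (hadd : ∀ u ∈ K, ∀ v ∈ K, u + v ∈ K)
    (hsmul : ∀ c : ℝ, 0 < c → ∀ u ∈ K, c • u ∈ K)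
    (hcl : IsClosed K) {b : τ → ℝ} (hb : b ∉ K) :
    ∃ y : τ → ℝ, (∀ x ∈ K, 0 ≤ ∑ i, x i * y i) ∧ ∑ i, y i * b i < 0 := by
  classical
  let e : EuclideanSpace ℝ τ ≃L[ℝ] (τ → ℝ) := PiLp.continuousLinearEquiv 2 ℝ _
  let K' : ConvexCone ℝ (EuclideanSpace ℝ τ) :=
    { carrier := e ⁻¹' K
      smul_mem' := by
        intro c hc x hx
        have : e (c • x) = c • e x := by simp
        simpa [Set.mem_preimage, this] using hsmul c hc (e x) hx
      add_mem' := by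
        intro x hx y hy
        have : e (x + y) = e x + e y := by simp
        simpa [Set.mem_preimage, this] using hadd (e x) hx (e y) hy }
  have hc' : IsClosed (K' : Set (EuclideanSpace ℝ τ)) := hcl.preimage e.continuous
  have hne : (K' : Set (EuclideanSpace ℝ τ)).Nonempty := by
    refine ⟨e.symm 0, ?_⟩
    show e (e.symm 0) ∈ K
    simpa using hK0
  have hb' : e.symm b ∉ K' := by
    intro h
    apply hb
    have : e (e.symm b) ∈ K := h
    simpa using this
  obtain ⟨y, hy1, hy2⟩ :=
    ProperCone.hyperplane_separation' (E := EuclideanSpace ℝ τ)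
      ({ carrier := (K' : Set (EuclideanSpace ℝ τ))
         add_mem' := fun hx hy => K'.add_mem hx hy
         zero_mem' := by
           show e 0 ∈ K
           simpa using hK0
         smul_mem' := fun c x hx => by
           rcases (NNReal.coe_nonneg c).eq_or_lt with hc | hc
           · have hc0 : c = 0 := NNReal.coe_eq_zero.1 hc.symm
             subst hc0
             show e ((0 : NNReal) • x) ∈ K
             simpa using hK0
           · exact K'.smul_mem hc hx
         isClosed' := hc' } : ProperCone ℝ (EuclideanSpace ℝ τ)) hb'
  refine ⟨e y, ?_, ?_⟩
  · intro x hx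
    have hx' : e.symm x ∈ K' := by
      show e (e.symm x) ∈ K
      simpa using hx
    have := hy1 (e.symm x) hx'
    rw [inner_eq_sum] at this
    simpa [e] using this
  · have := hy2
    rw [inner_eq_sum] at this
    simpa [e, mul_comm] using this

/-- Biduality: a point whose pairing with every dual element is nonnegative lies in the
closed convex cone. -/
lemma bidual {τ : Type*} [Fintype τ] (K : Set (τ → ℝ)) (hK0 : (0 : τ → ℝ) ∈ K)
    (hadd : ∀ u ∈ K, ∀ v ∈ K, u + v ∈ K)
    (hsmul : ∀ c : ℝ, 0 < c → ∀ u ∈ K, c • u ∈ K)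
    (hcl : IsClosed K) {w : τ → ℝ}
    (hw : ∀ s : τ → ℝ, (∀ u ∈ K, 0 ≤ ∑ i, u i * s i) → 0 ≤ ∑ i, w i * s i) : w ∈ K := by
  by_contra hb
  obtain ⟨y, h1, h2⟩ := sep K hK0 hadd hsmul hcl hb
  have h3 := hw y h1
  have : ∑ i, y i * w i = ∑ i, w i * y i := Finset.sum_congr rfl fun i _ => mul_comm _ _
  linarith [this ▸ h2]

/-- The image of a closed cone under a continuous homogeneous map with trivial
kernel-intersection is closed (finite dimensions). -/
lemma closed_image {E F : Type*} [NormedAddCommGroup E] [NormedSpace ℝ E]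
    [FiniteDimensional ℝ E] [NormedAddCommGroup F] [NormedSpace ℝ F]
    (f : E → F) (hf : Continuous f) (hsm : ∀ (c : ℝ) (x : E), f (c • x) = c • f x)
    (K : Set E) (hcl : IsClosed K) (hK : ∀ c : ℝ, 0 ≤ c → ∀ u ∈ K, c • u ∈ K)
    (hker : ∀ x ∈ K, f x = 0 → x = 0) : IsClosed (f '' K) := by
  apply IsSeqClosed.isClosed
  intro x y hx hxy
  have hx' : ∀ n, ∃ a, a ∈ K ∧ f a = x n := fun n => hx n
  choose u huK hufx using hx'
  -- the preimages are bounded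
  have hbdd : ∃ C : ℝ, ∀ m, ‖u m‖ ≤ C := by
    by_contra h
    push_neg at h
    choose φ hφ using fun m : ℕ => h ((m : ℝ) + 1)
    have hpos : ∀ m, 0 < ‖u (φ m)‖ := fun m =>
      lt_of_le_of_lt (by positivity) (hφ m)
    set w : ℕ → E := fun m => (‖u (φ m)‖)⁻¹ • u (φ m) with hw
    have hwK : ∀ m, w m ∈ K := fun m => hK _ (inv_nonneg.2 (hpos m).le) _ (huK _)
    have hw1 : ∀ m, w m ∈ Metric.sphere (0 : E) 1 := by
      intro m
      simp only [mem_sphere_iff_norm, sub_zero, hw, norm_smul, norm_inv, norm_norm]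
      exact inv_mul_cancel₀ (hpos m).ne'
    obtain ⟨w0, hw0s, ψ, hψ, hψt⟩ := (isCompact_sphere (0 : E) 1).tendsto_subseq hw1
    have hw0K : w0 ∈ K := hcl.mem_of_tendsto hψt (Filter.Eventually.of_forall fun m => hwK _)
    -- the sequence `x` is bounded in norm
    obtain ⟨B, hB⟩ : ∃ B : ℝ, ∀ n, ‖x n‖ ≤ B := by
      obtain ⟨B, hB⟩ := (hxy.norm).bddAbove_range
      exact ⟨B, fun n => hB ⟨n, rfl⟩⟩
    have hfw : Tendsto (fun m => f (w (ψ m))) atTop (𝓝 0) := by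
      refine squeeze_zero_norm (f := fun m => f (w (ψ m))) (a := fun m => ((m : ℝ) + 1)⁻¹ * B) (fun m => ?_) ?_
      · show ‖f (w (ψ m))‖ ≤ ((m : ℝ) + 1)⁻¹ * B
        have heq : f (w (ψ m)) = (‖u (φ (ψ m))‖)⁻¹ • x (φ (ψ m)) := by
          show f ((‖u (φ (ψ m))‖)⁻¹ • u (φ (ψ m))) = _
          rw [hsm, hufx]
        rw [heq, norm_smul, norm_inv, norm_norm]
        have h1 : (‖u (φ (ψ m))‖)⁻¹ ≤ ((m : ℝ) + 1)⁻¹ := by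
          apply inv_anti₀ (by positivity)
          calc (m : ℝ) + 1 ≤ (ψ m : ℝ) + 1 := by
                have hm : m ≤ ψ m := hψ.le_apply
                have : (m : ℝ) ≤ (ψ m : ℝ) := by exact_mod_cast hm
                linarith
            _ ≤ ‖u (φ (ψ m))‖ := (hφ (ψ m)).le
        calc (‖u (φ (ψ m))‖)⁻¹ * ‖x (φ (ψ m))‖
            ≤ ((m : ℝ) + 1)⁻¹ * ‖x (φ (ψ m))‖ := by
              apply mul_le_mul_of_nonneg_right h1 (norm_nonneg _)
          _ ≤ ((m : ℝ) + 1)⁻¹ * B := by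
              apply mul_le_mul_of_nonneg_left (hB _) (by positivity)
      · have h0 : Tendsto (fun m : ℕ => ((m : ℝ) + 1)⁻¹) atTop (𝓝 0) := by
          have := tendsto_one_div_add_atTop_nhds_zero_nat (𝕜 := ℝ)
          simpa [one_div] using this
        simpa using h0.mul_const B
    have hfw' : Tendsto (fun m => f (w (ψ m))) atTop (𝓝 (f w0)) :=
      (hf.continuousAt.tendsto.comp hψt)
    have hfw0 : f w0 = 0 := tendsto_nhds_unique hfw' hfw
    have : w0 = 0 := hker w0 hw0K hfw0
    rw [mem_sphere_iff_norm, sub_zero] at hw0s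
    rw [this] at hw0s
    simp at hw0s
  obtain ⟨C, hC⟩ := hbdd
  have hball : ∀ m, u m ∈ Metric.closedBall (0 : E) C := by
    intro m; simpa [Metric.mem_closedBall, dist_zero_right] using hC m
  obtain ⟨u0, _, φ, hφ, hφt⟩ :=
    (isCompact_closedBall (0 : E) C).tendsto_subseq hball
  have hu0K : u0 ∈ K := hcl.mem_of_tendsto hφt (Filter.Eventually.of_forall fun m => huK _)
  refine ⟨u0, hu0K, ?_⟩
  have h1 : Tendsto (fun m => f (u (φ m))) atTop (𝓝 (f u0)) :=
    hf.continuousAt.tendsto.comp hφt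
  have h2 : Tendsto (fun m => f (u (φ m))) atTop (𝓝 y) := by
    have : (fun m => f (u (φ m))) = fun m => x (φ m) := funext fun m => hufx _
    rw [this]
    exact hxy.comp hφ.tendsto_atTop
  exact tendsto_nhds_unique h1 h2

theorem stmt1 {n l : ℕ} (γ : Fin l → Finset (Fin n))
    (C : (k : Fin l) → Set ({i // i ∈ γ k} → ℝ))
    (hconv : ∀ k, Convex ℝ (C k))
    (hcone : ∀ k, ∀ c : ℝ, 0 ≤ c → ∀ u ∈ C k, c • u ∈ C k)
    (hclosed : ∀ k, IsClosed (C k))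
    (hpointed : ∀ k, C k ∩ (-(C k)) = {0})
    (hint : ∀ k, (interior (C k)).Nonempty)
    (hcover : ∀ i : Fin n, ∃ k, i ∈ γ k)
    (hslater : ∃ xb : Fin n → ℝ, ∀ k, Eext (γ k) xb ∈ interior (C k)) :
    {v : Fin n → ℝ | ∀ u ∈ {x : Fin n → ℝ | ∀ k, Eext (γ k) x ∈ C k},
        0 ≤ ∑ i, u i * v i}
    = {s : Fin n → ℝ | ∃ st : (k : Fin l) → ({i // i ∈ γ k} → ℝ),
        (∀ k, ∀ u ∈ C k, 0 ≤ ∑ i : {i // i ∈ γ k}, u i * st k i) ∧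
        s = ∑ k, Eemb (γ k) (st k)} := by
  classical
  obtain ⟨xb, hxb⟩ := hslater
  -- basic facts about the cones `C k`
  have h0C : ∀ k, (0 : {i // i ∈ γ k} → ℝ) ∈ C k := by
    intro k
    obtain ⟨u, hu⟩ := hint k
    simpa using hcone k 0 le_rfl u (interior_subset hu)
  have haddC : ∀ k, ∀ u ∈ C k, ∀ v ∈ C k, u + v ∈ C k := by
    intro k u hu v hv
    have h2 := (hconv k) hu hv (by norm_num : (0:ℝ) ≤ 1/2) (by norm_num : (0:ℝ) ≤ 1/2)
      (by norm_num)
    have h3 := hcone k 2 (by norm_num) _ h2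
    have h4 : (2:ℝ) • ((1/2 : ℝ) • u + (1/2:ℝ) • v) = u + v := by module
    rwa [h4] at h3
  -- the dual cones
  set dual : (k : Fin l) → Set ({i // i ∈ γ k} → ℝ) :=
    fun k => {s | ∀ u ∈ C k, 0 ≤ ∑ i, u i * s i} with hdual
  have h0dual : ∀ k, (0 : {i // i ∈ γ k} → ℝ) ∈ dual k := by
    intro k u _; simp
  have hadddual : ∀ k, ∀ s ∈ dual k, ∀ t ∈ dual k, s + t ∈ dual k := by
    intro k s hs t ht u hu
    have h1 := hs u hu
    have h2 := ht u hu
    have : ∑ i, u i * (s + t) i = (∑ i, u i * s i) + ∑ i, u i * t i := by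
      rw [← Finset.sum_add_distrib]
      exact Finset.sum_congr rfl fun i _ => by simp [mul_add]
    rw [this]; linarith
  have hsmuldual : ∀ k, ∀ c : ℝ, 0 ≤ c → ∀ s ∈ dual k, c • s ∈ dual k := by
    intro k c hc s hs u hu
    have h1 := hs u hu
    have : ∑ i, u i * (c • s) i = c * ∑ i, u i * s i := by
      rw [Finset.mul_sum]
      exact Finset.sum_congr rfl fun i _ => by simp [smul_eq_mul]; ring
    rw [this]
    exact mul_nonneg hc h1
  have hdualclosed : ∀ k, IsClosed (dual k) := by
    intro k
    have : dual k = ⋂ u ∈ C k, {s : {i // i ∈ γ k} → ℝ | 0 ≤ ∑ i, u i * s i} := by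
      ext s; simp [hdual, Set.mem_iInter]
    rw [this]
    refine isClosed_biInter fun u _ => ?_
    exact isClosed_le continuous_const
      (continuous_finset_sum _ fun i _ => continuous_const.mul (continuous_apply i))
  -- the map and the product cone
  set Φ : ((k : Fin l) → ({i // i ∈ γ k} → ℝ)) → (Fin n → ℝ) :=
    fun st => ∑ k, Eemb (γ k) (st k) with hΦ
  set K : Set ((k : Fin l) → ({i // i ∈ γ k} → ℝ)) := {st | ∀ k, st k ∈ dual k} with hK
  -- key pairing identity
  have key : ∀ (u : Fin n → ℝ) (st : (k : Fin l) → ({i // i ∈ γ k} → ℝ)),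
      ∑ i, u i * Φ st i = ∑ k, ∑ i : {i // i ∈ γ k}, u i.1 * st k i := by
    intro u st
    have h1 : ∀ i, Φ st i = ∑ k, Eemb (γ k) (st k) i := by
      intro i; rw [hΦ]; exact Finset.sum_apply i _ _
    calc ∑ i, u i * Φ st i = ∑ i, ∑ k, u i * Eemb (γ k) (st k) i := by
          exact Finset.sum_congr rfl fun i _ => by rw [h1, Finset.mul_sum]
      _ = ∑ k, ∑ i, u i * Eemb (γ k) (st k) i := Finset.sum_comm
      _ = ∑ k, ∑ i : {i // i ∈ γ k}, u i.1 * st k i :=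
          Finset.sum_congr rfl fun k _ => pair_emb (γ k) u (st k)
  have hΦcont : Continuous Φ :=
    continuous_finset_sum _ fun k _ => (continuous_Eemb (γ k)).comp (continuous_apply k)
  have hΦsmul : ∀ (c : ℝ) (st), Φ (c • st) = c • Φ st := by
    intro c st
    rw [hΦ, Finset.smul_sum]
    exact Finset.sum_congr rfl fun k _ => Eemb_smul (γ k) c (st k)
  have hΦadd : ∀ st st', Φ (st + st') = Φ st + Φ st' := by
    intro st st'
    rw [hΦ]
    dsimp only
    rw [← Finset.sum_add_distrib]
    exact Finset.sum_congr rfl fun k _ => Eemb_add (γ k) (st k) (st' k)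
  have hKclosed : IsClosed K := by
    have : K = ⋂ k, (fun st : (k : Fin l) → ({i // i ∈ γ k} → ℝ) => st k) ⁻¹' dual k := by
      ext st; simp [hK, Set.mem_iInter]
    rw [this]
    exact isClosed_iInter fun k => (hdualclosed k).preimage (continuous_apply k)
  have hKsmul : ∀ c : ℝ, 0 ≤ c → ∀ st ∈ K, c • st ∈ K :=
    fun c hc st hst k => hsmuldual k c hc (st k) (hst k)
  have hKadd : ∀ st ∈ K, ∀ st' ∈ K, st + st' ∈ K :=
    fun st hst st' hst' k => hadddual k (st k) (hst k) (st' k) (hst' k)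
  have h0K : (0 : (k : Fin l) → ({i // i ∈ γ k} → ℝ)) ∈ K := fun k => h0dual k
  -- trivial kernel intersection, via Slater's condition
  have hker : ∀ st ∈ K, Φ st = 0 → st = 0 := by
    intro st hst hΦ0
    have hsum0 : ∑ k, ∑ i : {i // i ∈ γ k}, Eext (γ k) xb i * st k i = 0 := by
      have := key xb st
      rw [hΦ0] at this
      simpa [Eext] using this.symm
    have hnonneg : ∀ k ∈ Finset.univ,
        0 ≤ ∑ i : {i // i ∈ γ k}, Eext (γ k) xb i * st k i := by
      intro k _
      exact hst k (Eext (γ k) xb) (interior_subset (hxb k))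
    have hzero := (Finset.sum_eq_zero_iff_of_nonneg hnonneg).1 hsum0
    funext k
    -- show `st k = 0` using interiority
    set s := st k with hs
    by_contra hne
    obtain ⟨ε, hε, hball⟩ := Metric.isOpen_iff.1 isOpen_interior _ (hxb k)
    have hsnorm : 0 < ‖s‖ := norm_pos_iff.2 hne
    set t : ℝ := ε / (2 * ‖s‖) with ht
    have htpos : 0 < t := by positivity
    have hmem : Eext (γ k) xb - t • s ∈ C k := by
      apply interior_subset
      apply hball
      rw [Metric.mem_ball, dist_eq_norm]
      have : Eext (γ k) xb - t • s - Eext (γ k) xb = -(t • s) := by abel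
      rw [this, norm_neg, norm_smul, Real.norm_eq_abs, abs_of_pos htpos, ht]
      have h2 : ε / (2 * ‖s‖) * ‖s‖ = ε / 2 := by
        field_simp
      rw [h2]; linarith
    have hge := hst k (Eext (γ k) xb - t • s) hmem
    have hexp : ∑ i : {i // i ∈ γ k}, (Eext (γ k) xb - t • s) i * s i
        = (∑ i : {i // i ∈ γ k}, Eext (γ k) xb i * s i) - t * ∑ i : {i // i ∈ γ k}, s i * s i := by
      rw [Finset.mul_sum, ← Finset.sum_sub_distrib]
      exact Finset.sum_congr rfl fun i _ => by simp [sub_mul, smul_eq_mul]; ring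
    rw [hexp, hzero k (Finset.mem_univ k)] at hge
    have hsq : ∑ i : {i // i ∈ γ k}, s i * s i ≤ 0 := by
      by_contra hpos
      push_neg at hpos
      nlinarith
    have hsq0 : ∀ i ∈ Finset.univ, s i * s i = 0 := by
      apply (Finset.sum_eq_zero_iff_of_nonneg (fun i _ => mul_self_nonneg (s i))).1
      have : 0 ≤ ∑ i : {i // i ∈ γ k}, s i * s i :=
        Finset.sum_nonneg fun i _ => mul_self_nonneg (s i)
      linarith
    apply hne
    funext i
    exact mul_self_eq_zero.1 (hsq0 i (Finset.mem_univ i))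
  have hDclosed : IsClosed (Φ '' K) :=
    closed_image Φ hΦcont hΦsmul K hKclosed hKsmul hker
  -- the RHS set is the image
  have hRHS : {s : Fin n → ℝ | ∃ st : (k : Fin l) → ({i // i ∈ γ k} → ℝ),
      (∀ k, ∀ u ∈ C k, 0 ≤ ∑ i : {i // i ∈ γ k}, u i * st k i) ∧
      s = ∑ k, Eemb (γ k) (st k)} = Φ '' K := by
    ext s
    constructor
    · rintro ⟨st, h1, h2⟩
      exact ⟨st, fun k => h1 k, h2.symm⟩
    · rintro ⟨st, h1, h2⟩
      exact ⟨st, fun k => h1 k, h2.symm⟩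
  rw [hRHS]
  ext v
  constructor
  · -- hard direction
    intro hv
    by_contra hvD
    obtain ⟨y, hy1, hy2⟩ := sep (Φ '' K)
      ⟨0, h0K, by rw [hΦ]; funext i; simp [Eemb_zero]⟩
      (by rintro _ ⟨st, hst, rfl⟩ _ ⟨st', hst', rfl⟩
          exact ⟨st + st', hKadd st hst st' hst', hΦadd st st'⟩)
      (by rintro c hc _ ⟨st, hst, rfl⟩
          exact ⟨c • st, hKsmul c hc.le st hst, hΦsmul c st⟩)
      hDclosed hvD
    -- `y` lies in the primal cone
    have hyC : ∀ k, Eext (γ k) y ∈ C k := by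
      intro k
      apply bidual (C k) (h0C k) (haddC k) (fun c hc u hu => hcone k c hc.le u hu) (hclosed k)
      intro s hsd
      -- pair `y` with the embedded `s`
      have hstK : (Function.update (0 : (j : Fin l) → ({i // i ∈ γ j} → ℝ)) k s) ∈ K := by
        intro j
        by_cases hj : j = k
        · subst hj; rw [Function.update_self]; exact fun u hu => hsd u hu
        · rw [Function.update_of_ne hj]; exact h0dual j
      have hd : Eemb (γ k) s ∈ Φ '' K := by
        refine ⟨_, hstK, ?_⟩
        rw [hΦ]
        dsimp only
        rw [Finset.sum_eq_single k]
        · rw [Function.update_self]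
        · intro j _ hj
          rw [Function.update_of_ne hj]
          exact Eemb_zero (γ j)
        · intro h; exact absurd (Finset.mem_univ k) h
      have := hy1 _ hd
      have heq : ∑ i, Eemb (γ k) s i * y i = ∑ i : {i // i ∈ γ k}, Eext (γ k) y i * s i := by
        calc ∑ i, Eemb (γ k) s i * y i = ∑ i, y i * Eemb (γ k) s i :=
              Finset.sum_congr rfl fun i _ => mul_comm _ _
          _ = ∑ i : {i // i ∈ γ k}, y i.1 * s i := pair_emb (γ k) y s
      rw [heq] at this
      exact this
    have := hv y hyC
    linarith
  · -- easy direction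
    rintro ⟨st, hst, rfl⟩ u hu
    rw [show (Φ st : Fin n → ℝ) = ∑ k, Eemb (γ k) (st k) from rfl] at *
    have := key u st
    rw [hΦ] at this
    rw [this]
    apply Finset.sum_nonneg
    intro k _
    exact hst k (Eext (γ k) u) (hu k)
end

section
/- A spanning tree of the intersection graph of index sets γ_1,...,γ_l that satisfies the running intersection property is a maximum weight spanning tree, where the weight of edge {i,j} is |γ_i ∩ γ_j|. -/
/-- The intersection graph of the index sets `γ₁, …, γ_l`. -/
def interGraph {l n : ℕ} (γ : Fin l → Finset (Fin n)) : SimpleGraph (Fin l) where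
  Adj i j := i ≠ j ∧ (γ i ∩ γ j).Nonempty
  symm := ⟨fun i j h => ⟨h.1.symm, by rw [Finset.inter_comm]; exact h.2⟩⟩
  loopless := ⟨fun i h => h.1 rfl⟩

/-- The running intersection property for a (spanning) tree `T` of the intersection graph:
`γ i ∩ γ j ⊆ γ k` whenever `γ k` lies on the path between `γ i` and `γ j` in `T`. -/
def RIP {l n : ℕ} (γ : Fin l → Finset (Fin n)) (T : SimpleGraph (Fin l)) : Prop :=
  ∀ (i j k : Fin l) (p : T.Walk i j), p.IsPath → k ∈ p.support → γ i ∩ γ j ⊆ γ k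

/-- The weight of a spanning tree: sum over edges `{i,j}` of `|γ i ∩ γ j|`. -/
noncomputable def treeWeight {l n : ℕ} (γ : Fin l → Finset (Fin n))
    (T : SimpleGraph (Fin l)) : ℕ :=
  ∑ e ∈ T.edgeSet.toFinite.toFinset,
    Sym2.lift ⟨fun i j => (γ i ∩ γ j).card, fun i j => by simp [Finset.inter_comm]⟩ e

namespace TreeAux

open SimpleGraph Finset

variable {V : Type*} [DecidableEq V] {G : SimpleGraph V}

/-- The unique path from `v` to `m` in a tree. -/
noncomputable def Q (hG : G.IsTree) (m v : V) : G.Walk v m :=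
  (hG.existsUnique_path v m).choose

lemma Q_isPath (hG : G.IsTree) (m v : V) : (Q hG m v).IsPath :=
  (hG.existsUnique_path v m).choose_spec.1

lemma Q_unique (hG : G.IsTree) (m v : V) {p : G.Walk v m} (hp : p.IsPath) : p = Q hG m v :=
  (hG.existsUnique_path v m).choose_spec.2 p hp

/-- The second vertex on the unique path from `v` to `m`. -/
noncomputable def sv (hG : G.IsTree) (m v : V) : V := (Q hG m v).getVert 1

lemma Q_self (hG : G.IsTree) (m : V) : Q hG m m = SimpleGraph.Walk.nil :=
  (Q_unique hG m m SimpleGraph.Walk.IsPath.nil).symm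

lemma sv_self (hG : G.IsTree) (m : V) : sv hG m m = m := by
  rw [sv, Q_self]; rfl

lemma Q_length_pos (hG : G.IsTree) {m v : V} (h : v ≠ m) : 0 < (Q hG m v).length :=
  Nat.pos_of_ne_zero fun h0 => h (SimpleGraph.Walk.eq_of_length_eq_zero h0)

lemma adj_sv (hG : G.IsTree) {m v : V} (h : v ≠ m) : G.Adj v (sv hG m v) := by
  have := (Q hG m v).adj_getVert_succ (Q_length_pos hG h)
  simpa [SimpleGraph.Walk.getVert_zero, sv] using this

lemma sv_mem_support (hG : G.IsTree) {m v : V} (h : v ≠ m) :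
    sv hG m v ∈ (Q hG m v).support := by
  rw [SimpleGraph.Walk.mem_support_iff_exists_getVert]
  exact ⟨1, rfl, Q_length_pos hG h⟩

/-- Key structural lemma: for adjacent `a b`, one of the unique paths to `m`
extends the other by the edge `ab`. -/
lemma Q_cons (hG : G.IsTree) (m : V) {a b : V} (hab : G.Adj a b) :
    Q hG m a = SimpleGraph.Walk.cons hab (Q hG m b) ∨
      Q hG m b = SimpleGraph.Walk.cons hab.symm (Q hG m a) := by
  by_cases ha : a ∈ (Q hG m b).support
  · right
    have hdrop : ((Q hG m b).dropUntil a ha).IsPath := (Q_isPath hG m b).dropUntil ha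
    have hQa : (Q hG m b).dropUntil a ha = Q hG m a := Q_unique hG m a hdrop
    have hb : b ∉ (Q hG m a).support := by
      rw [← hQa]
      intro hbmem
      have hnodup : ((Q hG m b).support).Nodup := (Q_isPath hG m b).support_nodup
      have h1 : (Q hG m b).support =
          ((Q hG m b).takeUntil a ha).support ++ ((Q hG m b).dropUntil a ha).support.tail := by
        rw [← SimpleGraph.Walk.support_append, SimpleGraph.Walk.take_spec]
      rw [h1] at hnodup
      have hdisj := List.disjoint_of_nodup_append hnodup
      have hbl : b ∈ ((Q hG m b).takeUntil a ha).support :=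
        SimpleGraph.Walk.start_mem_support _
      have hbr : b ∈ ((Q hG m b).dropUntil a ha).support.tail := by
        have := SimpleGraph.Walk.support_eq_cons ((Q hG m b).dropUntil a ha)
        rw [this] at hbmem
        rcases List.mem_cons.1 hbmem with h | h
        · exact absurd h hab.ne'
        · exact h
      exact hdisj hbl hbr
    exact (Q_unique hG m b ((Q_isPath hG m a).cons hb)).symm
  · left
    exact (Q_unique hG m a ((Q_isPath hG m b).cons ha)).symm

lemma sv_or (hG : G.IsTree) (m : V) {a b : V} (hab : G.Adj a b) :
    b = sv hG m a ∨ a = sv hG m b := by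
  rcases Q_cons hG m hab with h | h
  · left; rw [sv, h, SimpleGraph.Walk.getVert_cons_succ, SimpleGraph.Walk.getVert_zero]
  · right; rw [sv, h, SimpleGraph.Walk.getVert_cons_succ, SimpleGraph.Walk.getVert_zero]

lemma exists_child (hG : G.IsTree) (m : V) {e : Sym2 V} (he : e ∈ G.edgeSet) :
    ∃ c, e = s(c, sv hG m c) := by
  induction e with
  | _ a b =>
    have hab : G.Adj a b := he
    rcases sv_or hG m hab with h | h
    · exact ⟨a, by rw [← h]⟩
    · exact ⟨b, by rw [← h, Sym2.eq_swap]⟩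

end TreeAux

open TreeAux SimpleGraph Finset

open Classical in
/-- Number of edges of `G` with both endpoints in `S`. -/
noncomputable def eCount {l : ℕ} (G : SimpleGraph (Fin l)) (S : Finset (Fin l)) : ℕ :=
  (G.edgeSet.toFinite.toFinset.filter (fun e => ∀ v ∈ e, v ∈ S)).card

open Classical in
lemma eCount_def {l : ℕ} (G : SimpleGraph (Fin l)) (S : Finset (Fin l)) :
    eCount G S = (G.edgeSet.toFinite.toFinset.filter (fun e => ∀ v ∈ e, v ∈ S)).card := rfl

/-- Any tree has at most `|S| - 1` edges inside `S`. -/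
lemma eCount_le {l : ℕ} {G : SimpleGraph (Fin l)} (hG : G.IsTree) (S : Finset (Fin l))
    (hS : S.Nonempty) : eCount G S ≤ S.card - 1 := by
  classical
  obtain ⟨m, hm⟩ := hS
  rw [eCount_def]
  have hle : (G.edgeSet.toFinite.toFinset.filter (fun e => ∀ v ∈ e, v ∈ S)).card
      ≤ (S.erase m).card := by
    apply Finset.card_le_card_of_injOn
      (fun e => if h : ∃ c, e = s(c, sv hG m c) then h.choose else m)
    · intro e hemem
      rw [Finset.mem_coe, Finset.mem_filter, Set.Finite.mem_toFinset] at hemem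
      obtain ⟨he, hins⟩ := hemem
      have hex : ∃ c, e = s(c, sv hG m c) := exists_child hG m he
      simp only [Finset.mem_coe]; rw [dif_pos hex]
      obtain hspec := hex.choose_spec
      have hadj : G.Adj hex.choose (sv hG m hex.choose) := by
        rw [← SimpleGraph.mem_edgeSet, ← hspec]; exact he
      refine Finset.mem_erase.2 ⟨?_, ?_⟩
      · intro hcm
        rw [hcm] at hadj
        rw [sv_self hG m] at hadj
        exact G.irrefl hadj
      · rw [hspec] at hins
        exact hins _ (Sym2.mem_mk_left _ _)
    · intro e1 h1 e2 h2 hf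
      simp only [Finset.coe_filter, Set.mem_setOf_eq, Set.Finite.mem_toFinset] at h1 h2
      have hex1 : ∃ c, e1 = s(c, sv hG m c) := exists_child hG m h1.1
      have hex2 : ∃ c, e2 = s(c, sv hG m c) := exists_child hG m h2.1
      have hf' : (if h : ∃ c, e1 = s(c, sv hG m c) then h.choose else m)
          = (if h : ∃ c, e2 = s(c, sv hG m c) then h.choose else m) := hf
      rw [dif_pos hex1, dif_pos hex2] at hf'
      rw [hex1.choose_spec, hex2.choose_spec, hf']
  calc _ ≤ (S.erase m).card := hle
    _ = S.card - 1 := Finset.card_erase_of_mem hm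

/-- With the running intersection property, the tree has at least `|S| - 1` edges inside
`S = {i : x ∈ γ i}`. -/
lemma le_eCount {l n : ℕ} (γ : Fin l → Finset (Fin n)) {T : SimpleGraph (Fin l)}
    (hT : T.IsTree) (hrip : RIP γ T) (x : Fin n) (S : Finset (Fin l))
    (hSdef : ∀ i, i ∈ S ↔ x ∈ γ i) (hS : S.Nonempty) : S.card - 1 ≤ eCount T S := by
  classical
  obtain ⟨m, hm⟩ := hS
  rw [eCount_def]
  have hle : (S.erase m).card ≤
      (T.edgeSet.toFinite.toFinset.filter (fun e => ∀ v ∈ e, v ∈ S)).card := by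
    apply Finset.card_le_card_of_injOn (fun v => s(v, sv hT m v))
    · intro v hv
      obtain ⟨hvm, hvS⟩ := Finset.mem_erase.1 hv
      have hadj : T.Adj v (sv hT m v) := adj_sv hT hvm
      have hsvS : sv hT m v ∈ S := by
        rw [hSdef]
        have hsub := hrip v m (sv hT m v) (Q hT m v) (Q_isPath hT m v) (sv_mem_support hT hvm)
        exact hsub (Finset.mem_inter.2 ⟨(hSdef v).1 hvS, (hSdef m).1 hm⟩)
      rw [Finset.mem_coe, Finset.mem_filter, Set.Finite.mem_toFinset]
      refine ⟨hadj, ?_⟩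
      intro w hw
      rcases Sym2.mem_iff.1 hw with h | h
      · rw [h]; exact hvS
      · rw [h]; exact hsvS
    · intro v1 hv1 v2 hv2 hf
      simp only [Finset.coe_erase, Set.mem_diff, Finset.mem_coe, Set.mem_singleton_iff] at hv1 hv2
      rcases Sym2.eq_iff.1 hf with ⟨h, _⟩ | ⟨h12, h21⟩
      · exact h
      · exfalso
        have hadj : T.Adj v1 v2 := by
          have := adj_sv hT hv1.2
          rwa [h21] at this
        rcases Q_cons hT m hadj with h | h
        · have hnodup : ((Q hT m v1).support).Nodup := (Q_isPath hT m v1).support_nodup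
          rw [h, SimpleGraph.Walk.support_cons] at hnodup
          have hv1mem : v1 ∈ (Q hT m v2).support := by
            rw [h12]; exact sv_mem_support hT hv2.2
          exact (List.nodup_cons.1 hnodup).1 hv1mem
        · have hnodup : ((Q hT m v2).support).Nodup := (Q_isPath hT m v2).support_nodup
          rw [h, SimpleGraph.Walk.support_cons] at hnodup
          have hv2mem : v2 ∈ (Q hT m v1).support := by
            rw [← h21]; exact sv_mem_support hT hv1.2
          exact (List.nodup_cons.1 hnodup).1 hv2mem
  calc S.card - 1 = (S.erase m).card := (Finset.card_erase_of_mem hm).symm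
    _ ≤ _ := hle

lemma treeWeight_eq {l n : ℕ} (γ : Fin l → Finset (Fin n)) (G : SimpleGraph (Fin l)) :
    treeWeight γ G = ∑ x : Fin n, eCount G (Finset.univ.filter (fun i => x ∈ γ i)) := by
  classical
  rw [treeWeight]
  calc (∑ e ∈ G.edgeSet.toFinite.toFinset,
        Sym2.lift ⟨fun i j => (γ i ∩ γ j).card, fun i j => by simp [Finset.inter_comm]⟩ e)
      = ∑ e ∈ G.edgeSet.toFinite.toFinset, ∑ x : Fin n,
          if (∀ v ∈ e, v ∈ Finset.univ.filter (fun i => x ∈ γ i)) then 1 else 0 := by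
        refine Finset.sum_congr rfl fun e _ => ?_
        induction e with
        | _ i j =>
          simp only [Sym2.lift_mk]
          rw [← Finset.filter_univ_mem (γ i ∩ γ j), Finset.card_filter]
          refine Finset.sum_congr rfl fun x _ => ?_
          have hiff : (∀ v ∈ (s(i, j) : Sym2 (Fin l)),
              v ∈ Finset.univ.filter (fun k => x ∈ γ k)) ↔ x ∈ γ i ∩ γ j := by
            simp [Sym2.forall_mem_pair]
          simp only [hiff]
    _ = ∑ x : Fin n, ∑ e ∈ G.edgeSet.toFinite.toFinset,
          if (∀ v ∈ e, v ∈ Finset.univ.filter (fun i => x ∈ γ i)) then 1 else 0 :=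
        Finset.sum_comm
    _ = ∑ x : Fin n, eCount G (Finset.univ.filter (fun i => x ∈ γ i)) := by
        refine Finset.sum_congr rfl fun x _ => ?_
        rw [eCount_def, Finset.card_filter]

theorem stmt2 {l n : ℕ} (γ : Fin l → Finset (Fin n)) (T : SimpleGraph (Fin l))
    (hTsub : T ≤ interGraph γ) (hTtree : T.IsTree) (hrip : RIP γ T) :
    ∀ T' : SimpleGraph (Fin l), T' ≤ interGraph γ → T'.IsTree →
      treeWeight γ T' ≤ treeWeight γ T := by
  intro T' hT'sub hT'tree
  rw [treeWeight_eq γ T, treeWeight_eq γ T']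
  apply Finset.sum_le_sum
  intro x _
  classical
  by_cases hS : (Finset.univ.filter (fun i => x ∈ γ i)).Nonempty
  · exact (eCount_le hT'tree _ hS).trans
      (le_eCount γ hTtree hrip x _ (fun i => by simp) hS)
  · have h0 : eCount T' (Finset.univ.filter (fun i => x ∈ γ i)) = 0 := by
      rw [eCount, Finset.card_eq_zero, Finset.filter_eq_empty_iff]
      intro e he
      rw [Set.Finite.mem_toFinset] at he
      intro hall
      induction e with
      | _ i j =>
        exact hS ⟨i, hall i (Sym2.mem_mk_left i j)⟩
    simp [h0]
end

section
/- Let V be a chordal symmetric sparsity pattern of order p containing all diagonal entries, with cliques β_1,...,β_l. A matrix X ∈ S^p_V has a positive semidefinite completion (i.e., there exists a positive semidefinite Z ∈ S^p agreeing with X on all positions in V) if and only if every dense principal submatrix X_{β_k β_k}, k = 1,...,l, is positive semidefinite. -/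
/-- A graph is chordal if every cycle of length greater than three has a chord,
i.e. an edge of the graph joining two vertices of the cycle that is not an edge
of the cycle. -/
def Chordal {p : ℕ} (G : SimpleGraph (Fin p)) : Prop :=
  ∀ (v : Fin p) (w : G.Walk v v), w.IsCycle → 3 < w.length →
    ∃ a b : Fin p, a ∈ w.support ∧ b ∈ w.support ∧ G.Adj a b ∧ s(a, b) ∉ w.edges

/-- A maximal clique of a graph. -/
def IsMaxClique {p : ℕ} (G : SimpleGraph (Fin p)) (s : Finset (Fin p)) : Prop :=
  G.IsClique (s : Set (Fin p)) ∧
    ∀ t : Finset (Fin p), G.IsClique (t : Set (Fin p)) → s ⊆ t → s = t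

/-- The sparsity graph `G_V` of a symmetric sparsity pattern `V`. -/
def spGraph {p : ℕ} (V : Set (Fin p × Fin p))
    (hs : ∀ i j, (i, j) ∈ V → (j, i) ∈ V) : SimpleGraph (Fin p) where
  Adj i j := i ≠ j ∧ (i, j) ∈ V
  symm := ⟨fun i j h => ⟨h.1.symm, hs i j h.2⟩⟩
  loopless := ⟨fun _ h => h.1 rfl⟩



open Matrix

set_option linter.unusedSectionVars false

namespace PSDAux

variable {n : Type} [Fintype n] [DecidableEq n]

/-- bordered matrix [[a, xᵀ],[x, C]] indexed by Option n -/
def border (a : ℝ) (x : n → ℝ) (C : Matrix n n ℝ) : Matrix (Option n) (Option n) ℝ :=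
  Matrix.of fun i j =>
    match i, j with
    | none, none => a
    | none, some j => x j
    | some i, none => x i
    | some i, some j => C i j

@[simp] lemma border_nn (a x) (C : Matrix n n ℝ) : border a x C none none = a := rfl
@[simp] lemma border_ns (a x) (C : Matrix n n ℝ) (j) : border a x C none (some j) = x j := rfl
@[simp] lemma border_sn (a x) (C : Matrix n n ℝ) (i) : border a x C (some i) none = x i := rfl
@[simp] lemma border_ss (a x) (C : Matrix n n ℝ) (i j) : border a x C (some i) (some j) = C i j := rfl

lemma border_submatrix_some (a : ℝ) (x : n → ℝ) (C : Matrix n n ℝ) :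
    (border a x C).submatrix (some : n → Option n) (some : n → Option n) = C := by
  ext i j; rfl

lemma quadform_border (a : ℝ) (x : n → ℝ) (C : Matrix n n ℝ) (z : Option n → ℝ) :
    z ⬝ᵥ (border a x C) *ᵥ z =
      a * (z none * z none) + 2 * z none * (x ⬝ᵥ fun i => z (some i)) +
        (fun i => z (some i)) ⬝ᵥ (C *ᵥ fun i => z (some i)) := by
  have h1 : ∀ w : Option n → ℝ, z ⬝ᵥ w
      = z none * w none + (fun i => z (some i)) ⬝ᵥ (fun i => w (some i)) := by
    intro w; simp [dotProduct, Fintype.sum_option]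
  have h2 : ((border a x C) *ᵥ z) none = a * z none + (x ⬝ᵥ fun i => z (some i)) := by
    simp [mulVec, dotProduct, Fintype.sum_option]
  have h3 : (fun i => ((border a x C) *ᵥ z) (some i))
      = fun i => x i * z none + (C *ᵥ fun j => z (some j)) i := by
    funext i; simp [mulVec, dotProduct, Fintype.sum_option]
  rw [h1, h2, h3]
  have h4 : (fun i => z (some i)) ⬝ᵥ (fun i => x i * z none + (C *ᵥ fun j => z (some j)) i)
      = (fun i => z (some i)) ⬝ᵥ (fun i => x i * z none)
        + (fun i => z (some i)) ⬝ᵥ (C *ᵥ fun j => z (some j)) := by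
    simp [dotProduct, Finset.sum_add_distrib, mul_add]
  rw [h4]
  have h5 : (fun i => z (some i)) ⬝ᵥ (fun i => x i * z none)
      = ((fun i => z (some i)) ⬝ᵥ x) * z none := by
    simp [dotProduct, Finset.sum_mul, mul_assoc]
  rw [h5, dotProduct_comm]
  ring

lemma border_posSemidef {W : Matrix n n ℝ} (hW : W.PosSemidef) (y : n → ℝ) (a : ℝ)
    (ha : y ⬝ᵥ W *ᵥ y ≤ a) : (border a (W *ᵥ y) W).PosSemidef := by
  have hsymm : Wᵀ = W := hW.1
  have hsym : ∀ u : n → ℝ, (W *ᵥ y) ⬝ᵥ u = y ⬝ᵥ (W *ᵥ u) := by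
    intro u
    rw [dotProduct_comm, dotProduct_mulVec, ← mulVec_transpose, hsymm, dotProduct_comm,
      dotProduct_mulVec, ← mulVec_transpose, hsymm]
  refine Matrix.PosSemidef.of_dotProduct_mulVec_nonneg ?_ ?_
  · show (border a (W *ᵥ y) W)ᴴ = _
    ext i j
    cases i <;> cases j <;> simp [conjTranspose_apply] <;>
      exact congrFun (congrFun hW.1 _) _
  · intro z
    have hz : star z = z := star_trivial z
    rw [hz, quadform_border]
    set t := z none with ht
    set u := (fun i => z (some i)) with hu
    have key : a * (t * t) + 2 * t * ((W *ᵥ y) ⬝ᵥ u) + u ⬝ᵥ (W *ᵥ u)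
        = (a - y ⬝ᵥ W *ᵥ y) * (t * t) + (t • y + u) ⬝ᵥ W *ᵥ (t • y + u) := by
      rw [mulVec_add, mulVec_smul, dotProduct_add, add_dotProduct, add_dotProduct,
        dotProduct_smul, smul_dotProduct, smul_dotProduct, hsym u]
      have : u ⬝ᵥ (W *ᵥ y) = y ⬝ᵥ (W *ᵥ u) := by
        rw [← hsym u, dotProduct_comm]
      rw [dotProduct_smul, this]
      simp only [smul_eq_mul]
      ring
    rw [key]
    have h1 : 0 ≤ (a - y ⬝ᵥ W *ᵥ y) * (t * t) :=
      mul_nonneg (by linarith) (mul_self_nonneg t)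
    have h2 := hW.dotProduct_mulVec_nonneg (t • y + u)
    rw [star_trivial] at h2
    linarith

lemma lemB {C : Matrix n n ℝ} {x : n → ℝ} {a : ℝ} (hM : (border a x C).PosSemidef) :
    ∃ y : n → ℝ, C *ᵥ y = x ∧ y ⬝ᵥ (C *ᵥ y) ≤ a := by
  have hC : C.PosSemidef := border_submatrix_some a x C ▸ hM.submatrix some
  have ha : 0 ≤ a := by
    have := hM.dotProduct_mulVec_nonneg (fun i => Option.elim i 1 0)
    rw [star_trivial, quadform_border] at this
    simpa using this
  have horth : ∀ z : n → ℝ, C *ᵥ z = 0 → x ⬝ᵥ z = 0 := by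
    intro z hz
    by_contra hne
    set b := x ⬝ᵥ z with hb
    have hq : ∀ t : ℝ, 0 ≤ a * (t * t) + 2 * t * b := by
      intro t
      have := hM.dotProduct_mulVec_nonneg (fun i => Option.elim i t z)
      rw [star_trivial, quadform_border] at this
      simpa [hz] using this
    have hbne : b ≠ 0 := hne
    have hb2 : 0 < b * b := mul_self_pos.mpr hbne
    have h1 : (0:ℝ) < a + 1 := by linarith
    have h := hq (-b / (a + 1))
    field_simp at h
    nlinarith [hb2, ha]
  -- x lies in the range of C
  have hrange : ∃ y : n → ℝ, C *ᵥ y = x := by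
    classical
    let e := WithLp.equiv 2 (n → ℝ)
    let T := Matrix.toEuclideanLin C
    let K := LinearMap.range T
    have hinner : ∀ v w : EuclideanSpace ℝ n, inner ℝ v w = (e v) ⬝ᵥ (e w) := by
      intro v w
      simp only [PiLp.inner_apply, RCLike.inner_apply, dotProduct]
      simp [mul_comm]
      rfl
    obtain ⟨x₁, hx₁, x₂, hx₂, hsum⟩ := K.exists_add_mem_mem_orthogonal (e.symm x)
    have hTx₂ : C *ᵥ (e x₂) = 0 := by
      have hmem : T x₂ ∈ K := LinearMap.mem_range_self T x₂
      have h0 : inner ℝ (T x₂) x₂ = (0:ℝ) := (Submodule.mem_orthogonal K x₂).mp hx₂ _ hmem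
      rw [hinner] at h0
      have hTeq : e (T x₂) = C *ᵥ (e x₂) := Matrix.ofLp_toEuclideanLin_apply C x₂
      rw [hTeq, dotProduct_comm] at h0
      have := (hC.dotProduct_mulVec_zero_iff (e x₂)).mp (by rw [star_trivial]; exact h0)
      exact this
    have hx2zero : x₂ = 0 := by
      have hx0 : x ⬝ᵥ (e x₂) = 0 := horth _ hTx₂
      have hxx : inner ℝ (e.symm x) x₂ = (0:ℝ) := by
        rw [hinner]; simpa [e] using hx0
      have h12 : inner ℝ x₁ x₂ = (0:ℝ) :=
        (Submodule.mem_orthogonal K x₂).mp hx₂ _ hx₁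
      have h22 : inner ℝ x₂ x₂ = (0:ℝ) := by
        have : inner ℝ (x₁ + x₂) x₂ = (0:ℝ) := by rw [← hsum]; exact hxx
        rw [inner_add_left, h12, zero_add] at this
        exact this
      exact inner_self_eq_zero.mp h22
    have hx1 : e.symm x ∈ K := by
      rw [hsum, hx2zero, add_zero]
      exact hx₁
    obtain ⟨y', hy'⟩ := hx1
    refine ⟨e y', ?_⟩
    have := Matrix.ofLp_toEuclideanLin_apply C y'
    rw [hy'] at this
    simpa [e] using this.symm
  obtain ⟨y, hy⟩ := hrange
  refine ⟨y, hy, ?_⟩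
  have h := hM.dotProduct_mulVec_nonneg (fun i => Option.elim i (-1) y)
  rw [star_trivial, quadform_border] at h
  have hxy : x ⬝ᵥ y = y ⬝ᵥ (C *ᵥ y) := by rw [← hy, dotProduct_comm]
  simp only [Option.elim] at h
  rw [hxy] at h
  nlinarith

end PSDAux


open SimpleGraph

namespace ChordalAux

variable {α : Type}

def ChordalG (G : SimpleGraph α) : Prop :=
  ∀ (v : α) (w : G.Walk v v), w.IsCycle → 3 < w.length →
    ∃ a b : α, a ∈ w.support ∧ b ∈ w.support ∧ G.Adj a b ∧ s(a, b) ∉ w.edges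

lemma chordalG_induce {G : SimpleGraph α} (h : ChordalG G) (s : Set α) :
    ChordalG (G.induce s) := by
  intro v w hw hlen
  let f : G.induce s →g G := (SimpleGraph.Embedding.induce (G := G) s).toHom
  have hinj : Function.Injective f := (SimpleGraph.Embedding.induce (G := G) s).injective
  obtain ⟨a, b, ha, hb, hab, hne⟩ :=
    h (f v) (w.map f) (hw.map hinj) (by rwa [SimpleGraph.Walk.length_map])
  rw [SimpleGraph.Walk.support_map] at ha hb
  obtain ⟨a', ha', rfl⟩ := List.mem_map.mp ha
  obtain ⟨b', hb', rfl⟩ := List.mem_map.mp hb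
  refine ⟨a', b', ha', hb', hab, fun hmem => hne ?_⟩
  rw [SimpleGraph.Walk.edges_map]
  exact List.mem_map.mpr ⟨s(a', b'), hmem, Sym2.map_pair_eq f a' b'⟩

lemma edges_of_length_one {G : SimpleGraph α} {u v : α} {W : G.Walk u v}
    (h : W.length = 1) : s(u, v) ∈ W.edges := by
  cases W with
  | nil => simp at h
  | cons hadj W' =>
    have h0 : W'.length = 0 := by simpa using h
    have := W'.eq_of_length_eq_zero h0
    subst this
    simp

lemma shortcut {G : SimpleGraph α} [DecidableEq α] {x y u v : α} (P : G.Walk x y)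
    (hu : u ∈ P.support) (hv : v ∈ P.support) (huv : G.Adj u v) (he : s(u, v) ∉ P.edges) :
    ∃ w : G.Walk x y, (∀ z ∈ w.support, z ∈ P.support) ∧ w.length < P.length := by
  have hPlen : P.length = (P.takeUntil u hu).length + (P.dropUntil u hu).length := by
    have := congrArg SimpleGraph.Walk.length (P.take_spec hu)
    rw [SimpleGraph.Walk.length_append] at this
    omega
  by_cases hv2 : v ∈ (P.dropUntil u hu).support
  · set Q := P.dropUntil u hu with hQ
    set R := Q.dropUntil v hv2 with hR
    have hQlen : Q.length = (Q.takeUntil v hv2).length + R.length := by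
      rw [hR]
      have := congrArg SimpleGraph.Walk.length (Q.take_spec hv2)
      rw [SimpleGraph.Walk.length_append] at this
      omega
    have htv : 2 ≤ (Q.takeUntil v hv2).length := by
      rcases Nat.lt_or_ge (Q.takeUntil v hv2).length 2 with h2 | h2
      · interval_cases h : (Q.takeUntil v hv2).length
        · exact absurd ((Q.takeUntil v hv2).eq_of_length_eq_zero h) huv.ne
        · exact absurd (P.edges_dropUntil_subset hu
            (Q.edges_takeUntil_subset hv2 (edges_of_length_one h))) he
      · exact h2
    refine ⟨(P.takeUntil u hu).append (SimpleGraph.Walk.cons huv R), ?_, ?_⟩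
    · intro z hz
      rw [SimpleGraph.Walk.mem_support_append_iff] at hz
      rcases hz with hz | hz
      · exact P.support_takeUntil_subset hu hz
      · rw [SimpleGraph.Walk.support_cons, List.mem_cons] at hz
        rcases hz with rfl | hz
        · exact hu
        · exact P.support_dropUntil_subset hu (Q.support_dropUntil_subset hv2 hz)
    · rw [SimpleGraph.Walk.length_append, SimpleGraph.Walk.length_cons]
      omega
  · have hv3 : v ∈ (P.takeUntil u hu).support := by
      have := (SimpleGraph.Walk.mem_support_iff_exists_append (G := G)).mp hv
      rw [← P.take_spec hu, SimpleGraph.Walk.mem_support_append_iff] at hv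
      tauto
    set T := P.takeUntil u hu with hT
    have hTlen : T.length = (T.takeUntil v hv3).length + (T.dropUntil v hv3).length := by
      have := congrArg SimpleGraph.Walk.length (T.take_spec hv3)
      rw [SimpleGraph.Walk.length_append] at this
      omega
    have htv : 2 ≤ (T.dropUntil v hv3).length := by
      rcases Nat.lt_or_ge (T.dropUntil v hv3).length 2 with h2 | h2
      · interval_cases h : (T.dropUntil v hv3).length
        · exact absurd ((T.dropUntil v hv3).eq_of_length_eq_zero h).symm huv.ne
        · have := edges_of_length_one h
          rw [Sym2.eq_swap] at this
          exact absurd (P.edges_takeUntil_subset hu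
            (T.edges_dropUntil_subset hv3 this)) he
      · exact h2
    refine ⟨(T.takeUntil v hv3).append (SimpleGraph.Walk.cons huv.symm (P.dropUntil u hu)), ?_, ?_⟩
    · intro z hz
      rw [SimpleGraph.Walk.mem_support_append_iff] at hz
      rcases hz with hz | hz
      · exact P.support_takeUntil_subset hu (T.support_takeUntil_subset hv3 hz)
      · rw [SimpleGraph.Walk.support_cons, List.mem_cons] at hz
        rcases hz with rfl | hz
        · exact hv
        · exact P.support_dropUntil_subset hu hz
    · rw [SimpleGraph.Walk.length_append, SimpleGraph.Walk.length_cons]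
      omega

lemma exists_min_length_walk {G : SimpleGraph α} {x y : α} (Pr : G.Walk x y → Prop)
    (h : ∃ P, Pr P) : ∃ P, Pr P ∧ ∀ Q, Pr Q → P.length ≤ Q.length := by
  classical
  obtain ⟨P₀, hP₀⟩ := h
  have hex : ∃ m, ∃ P : G.Walk x y, Pr P ∧ P.length = m := ⟨P₀.length, P₀, hP₀, rfl⟩
  obtain ⟨P, hP, hlen⟩ := Nat.find_spec hex
  exact ⟨P, hP, fun Q hQ => by
    rw [hlen]; exact Nat.find_le ⟨Q, hQ, rfl⟩⟩



section Sep
variable [Fintype α] [DecidableEq α]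

lemma W1gen {G : SimpleGraph α} (S : Finset α) (A₀ : Set α)
    (hclo : ∀ x ∈ A₀, ∀ y, G.Adj x y → y ∉ S → y ∈ A₀)
    (hdisj : ∀ x ∈ A₀, x ∉ S) (s : α) (hsS : s ∈ S) :
    ∀ {c d : α} (w : G.Walk c d), c ∈ A₀ → (∀ z ∈ w.support, z ∈ S → z = s) →
      s ∈ w.support → ∃ u ∈ A₀, G.Adj u s := by
  intro c d w
  induction w with
  | nil =>
    intro hc _ hs
    simp only [SimpleGraph.Walk.support_nil, List.mem_singleton] at hs
    exact absurd hsS (hs ▸ hdisj _ hc)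
  | @cons c v d h p ih =>
    intro hc hcond hs
    by_cases hvs : v = s
    · exact ⟨c, hc, hvs ▸ h⟩
    · rw [SimpleGraph.Walk.support_cons, List.mem_cons] at hs
      rcases hs with rfl | hs
      · exact absurd hsS (hdisj s hc)
      · have hvA : v ∈ A₀ := by
          refine hclo c hc v h fun hvS => hvs (hcond v ?_ hvS)
          rw [SimpleGraph.Walk.support_cons]
          exact List.mem_cons_of_mem _ p.start_mem_support
        exact ih hvA (fun z hz => hcond z (by
          rw [SimpleGraph.Walk.support_cons]; exact List.mem_cons_of_mem _ hz)) hs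

lemma exists_clique_sep {G : SimpleGraph α}
    (hG : ChordalG G) {a b : α} (hab : a ≠ b) (hnadj : ¬ G.Adj a b) :
    ∃ S A B : Set α, a ∈ A ∧ b ∈ B ∧
      (∀ x ∈ A, ∀ y, G.Adj x y → y ∈ A ∪ S) ∧
      (∀ x ∈ B, ∀ y, G.Adj x y → y ∈ B ∪ S) ∧
      (∀ x, x ∈ A → x ∉ B) ∧ (∀ x ∈ A, x ∉ S) ∧ (∀ x ∈ B, x ∉ S) ∧
      G.IsClique S := by
  classical
  let Sep : Finset α → Prop := fun S =>
    a ∉ S ∧ b ∉ S ∧ ∀ w : G.Walk a b, ∃ x ∈ w.support, x ∈ S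
  have hSep0 : Sep (Finset.univ \ {a, b}) := by
    refine ⟨by simp, by simp, ?_⟩
    intro w
    by_contra hcon
    push_neg at hcon
    have hsupp : ∀ x ∈ w.support, x = a ∨ x = b := by
      intro x hx
      have := hcon x hx
      simp [Finset.mem_sdiff] at this
      tauto
    have key : ∀ (c d : α) (w' : G.Walk c d), c = a → d = b →
        (∀ x ∈ w'.support, x = a ∨ x = b) → False := by
      intro c d w'
      induction w' with
      | nil =>
        rintro rfl rfl _
        exact hab rfl
      | @cons c' v d' h p ih =>
        intro hc hd hsupp'
        have hv : v = a ∨ v = b := hsupp' v (by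
          rw [SimpleGraph.Walk.support_cons]
          exact List.mem_cons_of_mem _ p.start_mem_support)
        rcases hv with hva | hvb
        · exact ih hva hd (fun x hx => hsupp' x (by
            rw [SimpleGraph.Walk.support_cons]; exact List.mem_cons_of_mem _ hx))
        · exact hnadj (by rw [← hc, ← hvb]; exact h)
    exact key a b w rfl rfl hsupp
  obtain ⟨S, hS, hSmin⟩ := Set.Finite.exists_minimalFor id {S : Finset α | Sep S}
    (Set.toFinite _) ⟨_, hSep0⟩
  obtain ⟨haS, hbS, hSepS⟩ := hS
  set A : Set α := {x | ∃ w : G.Walk a x, ∀ y ∈ w.support, y ∉ S} with hA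
  set B : Set α := {x | ∃ w : G.Walk b x, ∀ y ∈ w.support, y ∉ S} with hB
  have haA : a ∈ A := ⟨SimpleGraph.Walk.nil, by simpa using haS⟩
  have hbB : b ∈ B := ⟨SimpleGraph.Walk.nil, by simpa using hbS⟩
  have hAS : ∀ x ∈ A, x ∉ S := fun x hx => hx.choose_spec x hx.choose.end_mem_support
  have hBS : ∀ x ∈ B, x ∉ S := fun x hx => hx.choose_spec x hx.choose.end_mem_support
  have hAclose : ∀ x ∈ A, ∀ y, G.Adj x y → y ∉ S → y ∈ A := by
    rintro x ⟨w, hw⟩ y hxy hyS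
    refine ⟨w.concat hxy, fun z hz => ?_⟩
    rw [SimpleGraph.Walk.support_concat, List.mem_append] at hz
    rcases hz with hz | hz
    · exact hw z hz
    · simp only [List.mem_singleton] at hz
      exact hz ▸ hyS
  have hBclose : ∀ x ∈ B, ∀ y, G.Adj x y → y ∉ S → y ∈ B := by
    rintro x ⟨w, hw⟩ y hxy hyS
    refine ⟨w.concat hxy, fun z hz => ?_⟩
    rw [SimpleGraph.Walk.support_concat, List.mem_append] at hz
    rcases hz with hz | hz
    · exact hw z hz
    · simp only [List.mem_singleton] at hz
      exact hz ▸ hyS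
  have hAnb : ∀ x ∈ A, ∀ y, G.Adj x y → y ∈ A ∪ (S : Set α) := by
    intro x hx y hxy
    by_cases hyS : y ∈ S
    · exact Or.inr hyS
    · exact Or.inl (hAclose x hx y hxy hyS)
  have hBnb : ∀ x ∈ B, ∀ y, G.Adj x y → y ∈ B ∪ (S : Set α) := by
    intro x hx y hxy
    by_cases hyS : y ∈ S
    · exact Or.inr hyS
    · exact Or.inl (hBclose x hx y hxy hyS)
  have hdisjAB : ∀ x, x ∈ A → x ∉ B := by
    rintro x ⟨wa, hwa⟩ ⟨wb, hwb⟩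
    obtain ⟨z, hz, hzS⟩ := hSepS (wa.append wb.reverse)
    rw [SimpleGraph.Walk.mem_support_append_iff] at hz
    rcases hz with hz | hz
    · exact hwa z hz hzS
    · rw [SimpleGraph.Walk.support_reverse, List.mem_reverse] at hz
      exact hwb z hz hzS
  have memA : ∀ (u : α) (w : G.Walk a u), (∀ y ∈ w.support, y ∉ S) →
      ∀ z ∈ w.support, z ∈ A :=
    fun u w h z hz => ⟨w.takeUntil z hz, fun y hy => h y (w.support_takeUntil_subset hz hy)⟩
  have memB : ∀ (u : α) (w : G.Walk b u), (∀ y ∈ w.support, y ∉ S) →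
      ∀ z ∈ w.support, z ∈ B :=
    fun u w h z hz => ⟨w.takeUntil z hz, fun y hy => h y (w.support_takeUntil_subset hz hy)⟩
  have hnbr : ∀ s ∈ S, (∃ u ∈ A, G.Adj u s) ∧ (∃ u ∈ B, G.Adj u s) := by
    intro s hsS
    have hnotsep : ¬ Sep (S.erase s) := by
      intro hsep
      have heq : S = S.erase s :=
        Finset.Subset.antisymm (hSmin hsep (Finset.erase_subset s S)) (Finset.erase_subset s S)
      exact (Finset.notMem_erase s S) (heq ▸ hsS)
    have hwalk : ∃ w : G.Walk a b, ∀ x ∈ w.support, x ∉ S.erase s := by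
      by_contra hcon
      push_neg at hcon
      exact hnotsep ⟨fun h => haS (Finset.mem_of_mem_erase h),
        fun h => hbS (Finset.mem_of_mem_erase h), fun w => hcon w⟩
    obtain ⟨w, hw⟩ := hwalk
    have hcond : ∀ z ∈ w.support, z ∈ S → z = s := by
      intro z hz hzS
      have := hw z hz
      rw [Finset.mem_erase] at this
      push_neg at this
      by_contra hne2
      exact absurd hzS (this hne2)
    obtain ⟨z, hzsup, hzS⟩ := hSepS w
    have hzs := hcond z hzsup hzS
    subst hzs
    constructor
    · exact W1gen S A hAclose hAS z hzS w haA hcond hzsup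
    · refine W1gen S B hBclose hBS z hzS w.reverse hbB ?_ ?_
      · intro y hy
        rw [SimpleGraph.Walk.support_reverse, List.mem_reverse] at hy
        exact hcond y hy
      · rw [SimpleGraph.Walk.support_reverse, List.mem_reverse]
        exact hzsup
  refine ⟨S, A, B, haA, hbB, hAnb, hBnb, hdisjAB, hAS, hBS, ?_⟩
  intro s hsS t htS hst
  simp only [Finset.coe_sort_coe, Finset.mem_coe] at hsS htS
  by_contra hstn
  obtain ⟨⟨us, husA, husadj⟩, ⟨vs, hvsB, hvsadj⟩⟩ := hnbr s hsS
  obtain ⟨⟨ut, hutA, hutadj⟩, ⟨vt, hvtB, hvtadj⟩⟩ := hnbr t htS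
  -- a walk from us to ut inside A
  have hWA : ∃ w : G.Walk us ut, ∀ z ∈ w.support, z ∈ A := by
    obtain ⟨wa, hwa⟩ := husA
    obtain ⟨wb, hwb⟩ := hutA
    refine ⟨wa.reverse.append wb, ?_⟩
    intro z hz
    rw [SimpleGraph.Walk.mem_support_append_iff] at hz
    rcases hz with hz | hz
    · rw [SimpleGraph.Walk.support_reverse, List.mem_reverse] at hz
      exact memA _ wa hwa z hz
    · exact memA _ wb hwb z hz
  have hWB : ∃ w : G.Walk vs vt, ∀ z ∈ w.support, z ∈ B := by
    obtain ⟨wa, hwa⟩ := hvsB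
    obtain ⟨wb, hwb⟩ := hvtB
    refine ⟨wa.reverse.append wb, ?_⟩
    intro z hz
    rw [SimpleGraph.Walk.mem_support_append_iff] at hz
    rcases hz with hz | hz
    · rw [SimpleGraph.Walk.support_reverse, List.mem_reverse] at hz
      exact memB _ wa hwa z hz
    · exact memB _ wb hwb z hz
  obtain ⟨wA, hwA⟩ := hWA
  obtain ⟨wB, hwB⟩ := hWB
  let PrA : G.Walk s t → Prop := fun w => ∀ z ∈ w.support, z = s ∨ z = t ∨ z ∈ A
  let PrB : G.Walk s t → Prop := fun w => ∀ z ∈ w.support, z = s ∨ z = t ∨ z ∈ B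
  have hPrA0 : ∃ w, PrA w := by
    refine ⟨SimpleGraph.Walk.cons husadj.symm (wA.concat hutadj), ?_⟩
    intro z hz
    rw [SimpleGraph.Walk.support_cons, List.mem_cons] at hz
    rcases hz with rfl | hz
    · exact Or.inl rfl
    · rw [SimpleGraph.Walk.support_concat, List.mem_append] at hz
      rcases hz with hz | hz
      · exact Or.inr (Or.inr (hwA z hz))
      · simp only [List.mem_singleton] at hz
        exact Or.inr (Or.inl hz)
  have hPrB0 : ∃ w, PrB w := by
    refine ⟨SimpleGraph.Walk.cons hvsadj.symm (wB.concat hvtadj), ?_⟩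
    intro z hz
    rw [SimpleGraph.Walk.support_cons, List.mem_cons] at hz
    rcases hz with rfl | hz
    · exact Or.inl rfl
    · rw [SimpleGraph.Walk.support_concat, List.mem_append] at hz
      rcases hz with hz | hz
      · exact Or.inr (Or.inr (hwB z hz))
      · simp only [List.mem_singleton] at hz
        exact Or.inr (Or.inl hz)
  obtain ⟨P₁, hP₁, hP₁min⟩ := exists_min_length_walk PrA hPrA0
  obtain ⟨Q₁, hQ₁, hQ₁min⟩ := exists_min_length_walk PrB hPrB0
  set P := P₁.bypass with hPdef
  set Q := Q₁.bypass with hQdef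
  have hPpr : PrA P := fun z hz => hP₁ z (P₁.support_bypass_subset hz)
  have hQpr : PrB Q := fun z hz => hQ₁ z (Q₁.support_bypass_subset hz)
  have hPmin : ∀ w, PrA w → P.length ≤ w.length :=
    fun w hw => le_trans P₁.length_bypass_le (hP₁min w hw)
  have hQmin : ∀ w, PrB w → Q.length ≤ w.length :=
    fun w hw => le_trans Q₁.length_bypass_le (hQ₁min w hw)
  have hPpath : P.IsPath := P₁.bypass_isPath
  have hQpath : Q.IsPath := Q₁.bypass_isPath
  have hsA : s ∉ A := fun h => hAS s h hsS
  have htA : t ∉ A := fun h => hAS t h htS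
  have hsB : s ∉ B := fun h => hBS s h hsS
  have htB : t ∉ B := fun h => hBS t h htS
  have hP2 : 2 ≤ P.length := by
    rcases Nat.lt_or_ge P.length 2 with h2 | h2
    · interval_cases h : P.length
      · exact absurd (P.eq_of_length_eq_zero h) hst
      · exact absurd (SimpleGraph.Walk.adj_of_length_eq_one h) hstn
    · exact h2
  have hQ2 : 2 ≤ Q.length := by
    rcases Nat.lt_or_ge Q.length 2 with h2 | h2
    · interval_cases h : Q.length
      · exact absurd (Q.eq_of_length_eq_zero h) hst
      · exact absurd (SimpleGraph.Walk.adj_of_length_eq_one h) hstn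
    · exact h2
  set C : G.Walk s s := P.append Q.reverse with hCdef
  have hClen : C.length = P.length + Q.length := by
    rw [hCdef, SimpleGraph.Walk.length_append, SimpleGraph.Walk.length_reverse]
  have hPQst : ∀ z, z ∈ P.support → z ∈ Q.support → z = s ∨ z = t := by
    intro z hzP hzQ
    rcases hPpr z hzP with rfl | rfl | hz
    · exact Or.inl rfl
    · exact Or.inr rfl
    · rcases hQpr z hzQ with rfl | rfl | hz'
      · exact absurd hz hsA
      · exact absurd hz htA
      · exact absurd hz' (hdisjAB z hz)
  have hCcycle : C.IsCycle := by
    rw [SimpleGraph.Walk.isCycle_def]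
    refine ⟨⟨?_⟩, ?_, ?_⟩
    · -- edges nodup
      rw [hCdef, SimpleGraph.Walk.edges_append]
      refine List.Nodup.append hPpath.isTrail.edges_nodup ?_ ?_
      · rw [SimpleGraph.Walk.edges_reverse]
        exact List.nodup_reverse.mpr hQpath.isTrail.edges_nodup
      · intro e heP heQ
        rw [SimpleGraph.Walk.edges_reverse, List.mem_reverse] at heQ
        induction e with
        | h x y =>
          have hx : x ∈ P.support := P.fst_mem_support_of_mem_edges heP
          have hy : y ∈ P.support := P.snd_mem_support_of_mem_edges heP
          have hx' : x ∈ Q.support := Q.fst_mem_support_of_mem_edges heQ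
          have hy' : y ∈ Q.support := Q.snd_mem_support_of_mem_edges heQ
          have hadj : G.Adj x y := P.adj_of_mem_edges heP
          rcases hPQst x hx hx' with rfl | rfl
          · rcases hPQst y hy hy' with rfl | rfl
            · exact hadj.ne rfl
            · exact hstn hadj
          · rcases hPQst y hy hy' with rfl | rfl
            · exact hstn hadj.symm
            · exact hadj.ne rfl
    · intro h
      have := congrArg SimpleGraph.Walk.length h
      rw [hClen] at this
      simp only [SimpleGraph.Walk.length_nil] at this
      omega
    · rw [hCdef, SimpleGraph.Walk.tail_support_append]
      have hPt : P.support.tail.Nodup := hPpath.support_nodup.tail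
      have hQt : Q.reverse.support.tail.Nodup := hQpath.reverse.support_nodup.tail
      refine List.Nodup.append hPt hQt ?_
      intro z hzP hzQ
      have hzP' : z ∈ P.support := List.mem_of_mem_tail hzP
      have hzns : z ≠ s := by
        intro h
        subst h
        have := hPpath.support_nodup
        rw [P.support_eq_cons] at this
        exact (List.nodup_cons.mp this).1 hzP
      have hzQ' : z ∈ Q.support := by
        have := List.mem_of_mem_tail hzQ
        rw [SimpleGraph.Walk.support_reverse, List.mem_reverse] at this
        exact this
      have hznt : z ≠ t := by
        intro h
        subst h
        have := hQpath.reverse.support_nodup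
        rw [Q.reverse.support_eq_cons] at this
        exact (List.nodup_cons.mp this).1 hzQ
      rcases hPQst z hzP' hzQ' with rfl | rfl
      · exact hzns rfl
      · exact hznt rfl
  obtain ⟨u, v, huC, hvC, huvadj, hne⟩ := hG s C hCcycle (by omega)
  have hCs : ∀ z, z ∈ C.support → z ∈ P.support ∨ z ∈ Q.support := by
    intro z hz
    rw [hCdef, SimpleGraph.Walk.mem_support_append_iff] at hz
    rcases hz with hz | hz
    · exact Or.inl hz
    · rw [SimpleGraph.Walk.support_reverse, List.mem_reverse] at hz
      exact Or.inr hz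
  have hneP : s(u, v) ∉ P.edges := by
    intro h
    exact hne (by rw [hCdef, SimpleGraph.Walk.edges_append]; exact List.mem_append_left _ h)
  have hneQ : s(u, v) ∉ Q.edges := by
    intro h
    apply hne
    rw [hCdef, SimpleGraph.Walk.edges_append]
    refine List.mem_append_right _ ?_
    rw [SimpleGraph.Walk.edges_reverse, List.mem_reverse]
    exact h
  have hcontrP : u ∈ P.support → v ∈ P.support → False := by
    intro hu hv
    obtain ⟨w', hw's, hw'len⟩ := shortcut P hu hv huvadj hneP
    have : PrA w' := fun z hz => hPpr z (hw's z hz)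
    exact absurd (hPmin w' this) (by omega)
  have hcontrQ : u ∈ Q.support → v ∈ Q.support → False := by
    intro hu hv
    obtain ⟨w', hw's, hw'len⟩ := shortcut Q hu hv huvadj hneQ
    have : PrB w' := fun z hz => hQpr z (hw's z hz)
    exact absurd (hQmin w' this) (by omega)
  have hABedge : ∀ x y, x ∈ A → y ∈ B → G.Adj x y → False := by
    intro x y hx hy hxy
    rcases hAnb x hx y hxy with h | h
    · exact hdisjAB y h hy
    · exact hBS y hy h
  rcases hCs u huC with huP | huQ
  · by_cases hvP : v ∈ P.support
    · exact hcontrP huP hvP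
    · have hvQ : v ∈ Q.support := (hCs v hvC).resolve_left hvP
      by_cases huQ : u ∈ Q.support
      · exact hcontrQ huQ hvQ
      · have huA : u ∈ A := by
          rcases hPpr u huP with rfl | rfl | h
          · exact absurd Q.start_mem_support huQ
          · exact absurd Q.end_mem_support huQ
          · exact h
        have hvB : v ∈ B := by
          rcases hQpr v hvQ with rfl | rfl | h
          · exact absurd P.start_mem_support hvP
          · exact absurd P.end_mem_support hvP
          · exact h
        exact hABedge u v huA hvB huvadj
  · by_cases hvQ : v ∈ Q.support
    · exact hcontrQ huQ hvQ
    · have hvP : v ∈ P.support := (hCs v hvC).resolve_right hvQ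
      by_cases huP : u ∈ P.support
      · exact hcontrP huP hvP
      · have hvA : v ∈ A := by
          rcases hPpr v hvP with rfl | rfl | h
          · exact absurd Q.start_mem_support hvQ
          · exact absurd Q.end_mem_support hvQ
          · exact h
        have huB : u ∈ B := by
          rcases hQpr u huQ with rfl | rfl | h
          · exact absurd P.start_mem_support huP
          · exact absurd P.end_mem_support huP
          · exact h
        exact hABedge v u hvA huB huvadj.symm

end Sep
theorem dirac : ∀ (n : ℕ) (α : Type) (_ : Fintype α) (_ : DecidableEq α)
    (G : SimpleGraph α), Fintype.card α ≤ n → ChordalG G →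
    (Nonempty α → ∃ v, G.IsClique (G.neighborSet v)) ∧
    ((∃ a b : α, a ≠ b ∧ ¬ G.Adj a b) →
      ∃ a b : α, a ≠ b ∧ ¬G.Adj a b ∧ G.IsClique (G.neighborSet a) ∧
        G.IsClique (G.neighborSet b)) := by
  intro n
  induction n with
  | zero =>
    intro α instF instD G hcard hG
    have hemp : IsEmpty α := Fintype.card_eq_zero_iff.mp (le_antisymm hcard (Nat.zero_le _))
    exact ⟨fun h => absurd h (not_nonempty_iff.mpr hemp),
      fun ⟨a, _⟩ => (hemp.false a).elim⟩
  | succ n IH =>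
    intro α instF instD G hcard hG
    have Hpair : (∃ a b : α, a ≠ b ∧ ¬ G.Adj a b) →
        ∃ a b : α, a ≠ b ∧ ¬G.Adj a b ∧ G.IsClique (G.neighborSet a) ∧
          G.IsClique (G.neighborSet b) := by
      rintro ⟨a, b, hab, hnadj⟩
      obtain ⟨S, A, B, haA, hbB, hAnb, hBnb, hdisjAB, hAS, hBS, hSclique⟩ :=
        exists_clique_sep hG hab hnadj
      have pick : ∀ (A₀ : Set α) (c : α), c ∈ A₀ →
          (∀ x ∈ A₀, ∀ y, G.Adj x y → y ∈ A₀ ∪ S) → (∀ x ∈ A₀, x ∉ S) →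
          (∃ z, z ∉ A₀ ∪ S) →
          ∃ v ∈ A₀, G.IsClique (G.neighborSet v) := by
        rintro A₀ c hcA hAnb₀ hAS₀ ⟨z0, hz0⟩
        set T : Set α := A₀ ∪ S with hT
        letI : DecidablePred (· ∈ T) := Classical.decPred _
        letI instT : Fintype (↥T) := setFintype T
        letI instDT : DecidableEq (↥T) := Classical.decEq _
        have hcardT : Fintype.card (↥T) ≤ n := by
          have h1 : Fintype.card (↥T) < Fintype.card α :=
            Fintype.card_subtype_lt (x := z0) hz0
          omega
        have hchT : ChordalG (G.induce T) := chordalG_induce hG T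
        obtain ⟨H1, H2⟩ := IH (↥T) instT instDT (G.induce T) hcardT hchT
        have transfer : ∀ (v : ↥T), (v : α) ∈ A₀ →
            (G.induce T).IsClique ((G.induce T).neighborSet v) →
            G.IsClique (G.neighborSet (v : α)) := by
          intro v hvA hclq p hp q hq hpq
          have hpT : p ∈ T := hAnb₀ _ hvA p hp
          have hqT : q ∈ T := hAnb₀ _ hvA q hq
          have h1 : (⟨p, hpT⟩ : ↥T) ∈ (G.induce T).neighborSet v := hp
          have h2 : (⟨q, hqT⟩ : ↥T) ∈ (G.induce T).neighborSet v := hq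
          exact hclq h1 h2 (fun h => hpq (congrArg Subtype.val h))
        by_cases hcomp : ∃ x y : ↥T, x ≠ y ∧ ¬ (G.induce T).Adj x y
        · obtain ⟨x, y, hxy, hnxy, hx, hy⟩ := H2 hcomp
          have hmem : (x : α) ∈ A₀ ∨ (y : α) ∈ A₀ := by
            by_contra hcon
            push_neg at hcon
            have hxS : (x : α) ∈ S := x.2.resolve_left hcon.1
            have hyS : (y : α) ∈ S := y.2.resolve_left hcon.2
            exact hnxy (hSclique hxS hyS fun h => hxy (Subtype.ext h))
          rcases hmem with h | h
          · exact ⟨x, h, transfer x h hx⟩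
          · exact ⟨y, h, transfer y h hy⟩
        · push_neg at hcomp
          refine ⟨c, hcA, ?_⟩
          intro p hp q hq hpq
          have hpT : p ∈ T := hAnb₀ _ hcA p hp
          have hqT : q ∈ T := hAnb₀ _ hcA q hq
          exact hcomp ⟨p, hpT⟩ ⟨q, hqT⟩ fun h => hpq (congrArg Subtype.val h)
      have hbnT : b ∉ A ∪ S := by
        rintro (h | h)
        · exact hdisjAB b h hbB
        · exact hBS b hbB h
      have hanT : a ∉ B ∪ S := by
        rintro (h | h)
        · exact hdisjAB a haA h
        · exact hAS a haA h
      obtain ⟨vA, hvA, hvAsimp⟩ := pick A a haA hAnb hAS ⟨b, hbnT⟩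
      obtain ⟨vB, hvB, hvBsimp⟩ := pick B b hbB hBnb hBS ⟨a, hanT⟩
      refine ⟨vA, vB, ?_, ?_, hvAsimp, hvBsimp⟩
      · intro h
        exact hdisjAB vA hvA (h ▸ hvB)
      · intro hadj
        rcases hAnb vA hvA vB hadj with h | h
        · exact hdisjAB vB h hvB
        · exact hBS vB hvB h
    refine ⟨?_, Hpair⟩
    intro hne
    by_cases hcomp : ∃ a b : α, a ≠ b ∧ ¬G.Adj a b
    · obtain ⟨v, w, _, _, hv, _⟩ := Hpair hcomp
      exact ⟨v, hv⟩
    · push_neg at hcomp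
      obtain ⟨v⟩ := hne
      exact ⟨v, fun p _ q _ hpq => hcomp p q hpq⟩

end ChordalAux


open Matrix SimpleGraph

namespace MainPSD
open PSDAux ChordalAux

lemma psd_empty {β : Type} [Fintype β] [DecidableEq β] (h : IsEmpty β)
    (M : Matrix β β ℝ) : M.PosSemidef := by
  constructor
  · ext i j
    exact (h.false i).elim
  · intro x
    have : x = 0 := Finsupp.ext fun i => (h.false i).elim
    rw [this]; simp

theorem main_psd : ∀ (n : ℕ) (α : Type) (_ : Fintype α) (_ : DecidableEq α)
    (G : SimpleGraph α) (X : Matrix α α ℝ), Fintype.card α ≤ n → ChordalG G →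
    X.IsSymm →
    (∀ s : Finset α, G.IsClique (s : Set α) →
      (X.submatrix (fun i : {a // a ∈ s} => (i : α))
        (fun j : {a // a ∈ s} => (j : α))).PosSemidef) →
    ∃ Z : Matrix α α ℝ, Z.PosSemidef ∧ ∀ i j : α, (i = j ∨ G.Adj i j) → Z i j = X i j := by
  intro n
  induction n with
  | zero =>
    intro α instF instD G X hcard _ _ _
    have hemp : IsEmpty α := Fintype.card_eq_zero_iff.mp (le_antisymm hcard (Nat.zero_le _))
    exact ⟨X, psd_empty hemp X, fun i j _ => rfl⟩
  | succ n IH =>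
    intro α instF instD G X hcard hG hsymm hclq
    by_cases hle : Fintype.card α ≤ n
    · exact IH α instF instD G X hle hG hsymm hclq
    · letI : DecidableRel G.Adj := Classical.decRel _
      have hne : Nonempty α := Fintype.card_pos_iff.mp (by omega)
      have hXs : ∀ i j : α, X j i = X i j := fun i j => congrFun (congrFun hsymm i) j
      obtain ⟨v, hv⟩ := (dirac (n+1) α instF instD G hcard hG).1 hne
      set s' : Set α := {x | x ≠ v} with hs'
      letI : Fintype (↥s') := setFintype s'
      letI : DecidableEq (↥s') := Classical.decEq _
      have hcard' : Fintype.card (↥s') ≤ n := by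
        have h1 : Fintype.card (↥s') < Fintype.card α :=
          Fintype.card_subtype_lt (x := v) (by simp [hs'])
        omega
      set G' : SimpleGraph (↥s') := G.induce s' with hG'
      have hch' : ChordalG G' := chordalG_induce hG s'
      set X' : Matrix (↥s') (↥s') ℝ :=
        X.submatrix (fun i => (i : α)) (fun j => (j : α)) with hX'
      have hsymm' : X'.IsSymm := by
        show X'ᵀ = X'
        ext i j
        exact hXs (i : α) (j : α)
      have hadj' : ∀ p q : ↥s', G.Adj (p : α) (q : α) → G'.Adj p q := by
        intro p q h
        exact h
      have hclq' : ∀ s : Finset (↥s'), G'.IsClique (s : Set (↥s')) →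
          (X'.submatrix (fun i : {a // a ∈ s} => (i : ↥s'))
            (fun j : {a // a ∈ s} => (j : ↥s'))).PosSemidef := by
        intro s hs
        set t : Finset α := s.map ⟨Subtype.val, Subtype.val_injective⟩ with htdef
        have ht : G.IsClique (t : Set α) := by
          intro p hp q hq hpq
          simp only [htdef, Finset.coe_map, Set.mem_image, Finset.mem_coe,
            Function.Embedding.coeFn_mk] at hp hq
          obtain ⟨p', hp', rfl⟩ := hp
          obtain ⟨q', hq', rfl⟩ := hq
          exact hs hp' hq' (fun h => hpq (congrArg Subtype.val h))
        have hmem : ∀ i : {a // a ∈ s}, ((i : ↥s') : α) ∈ t := by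
          intro i
          simp only [htdef, Finset.mem_map, Function.Embedding.coeFn_mk]
          exact ⟨(i : ↥s'), i.2, rfl⟩
        set g : {a // a ∈ s} → {a // a ∈ t} := fun i => ⟨((i : ↥s') : α), hmem i⟩ with hg
        have key : X'.submatrix (fun i : {a // a ∈ s} => (i : ↥s'))
            (fun j : {a // a ∈ s} => (j : ↥s'))
            = (X.submatrix (fun i : {a // a ∈ t} => (i : α))
                (fun j : {a // a ∈ t} => (j : α))).submatrix g g := by
          ext i j
          rfl
        rw [key]
        exact (hclq t ht).submatrix g
      obtain ⟨W, hWpsd, hWagree⟩ := IH (↥s') (setFintype s') (Classical.decEq _) G' X' hcard' hch' hsymm' hclq'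
      -- the clique consisting of v and its neighbours
      set K : Finset α := insert v (G.neighborFinset v) with hK
      have hKclique : G.IsClique (K : Set α) := by
        intro p hp q hq hpq
        simp only [hK, Finset.coe_insert, Set.mem_insert_iff, Finset.mem_coe,
          mem_neighborFinset] at hp hq
        rcases hp with rfl | hp
        · rcases hq with rfl | hq
          · exact absurd rfl hpq
          · exact hq
        · rcases hq with rfl | hq
          · exact hp.symm
          · exact hv hp hq hpq
      have hKpsd := hclq K hKclique
      -- σ : neighbours of v as a subtype of ↥s'
      set σ : Type := {u : ↥s' // G.Adj v (u : α)} with hσ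
      letI : Fintype σ := by
        unfold σ
        infer_instance
      letI : DecidableEq σ := Classical.decEq _
      set C : Matrix σ σ ℝ := W.submatrix (fun p => (p : ↥s')) (fun q => (q : ↥s')) with hC
      set x : σ → ℝ := fun q => X v ((q : ↥s') : α) with hx
      have hCeq : ∀ p q : σ, C p q = X ((p : ↥s') : α) ((q : ↥s') : α) := by
        intro p q
        by_cases hpq : (p : ↥s') = q
        · exact hWagree _ _ (Or.inl hpq)
        · refine hWagree _ _ (Or.inr ?_)
          refine hadj' _ _ (hv p.2 q.2 ?_)
          intro h
          exact hpq (Subtype.ext h)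
      have hborder : (border (X v v) x C).PosSemidef := by
        set f : Option σ → α := fun o => o.elim v (fun p => ((p : ↥s') : α)) with hf
        have hfK : ∀ o : Option σ, f o ∈ K := by
          intro o
          cases o with
          | none => exact Finset.mem_insert_self v _
          | some p =>
            refine Finset.mem_insert_of_mem ?_
            rw [mem_neighborFinset]
            exact p.2
        set g : Option σ → {a // a ∈ K} := fun o => ⟨f o, hfK o⟩ with hg
        have heq : border (X v v) x C = X.submatrix f f := by
          ext i j
          cases i with
          | none =>
            cases j with
            | none => rfl
            | some q => rfl
          | some p =>
            cases j with
            | none =>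
              show X v _ = X _ v
              exact (hXs v _).symm
            | some q => exact (hCeq p q)
        have hsub : X.submatrix f f
            = (X.submatrix (fun i : {a // a ∈ K} => (i : α))
                (fun j : {a // a ∈ K} => (j : α))).submatrix g g := by
          ext i j
          rfl
        rw [heq, hsub]
        exact hKpsd.submatrix g
      obtain ⟨yS, hCy, hyCy⟩ := lemB hborder
      set y : ↥s' → ℝ := fun u => if h : G.Adj v (u : α) then yS ⟨u, h⟩ else 0 with hy
      have hsum : ∀ g : ↥s' → ℝ, (∑ u, g u * y u) = ∑ q : σ, g (q : ↥s') * yS q := by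
        intro g
        have hvanish : ∀ u ∈ Finset.univ, (fun u => g u * y u) u ≠ 0 →
            G.Adj v (u : α) := by
          intro u _ hne'
          by_contra hcon
          apply hne'
          simp [hy, hcon]
        rw [← Finset.sum_filter_of_ne hvanish]
        rw [Finset.sum_subtype (p := fun u : ↥s' => G.Adj v (u : α))
          (Finset.univ.filter fun u : ↥s' => G.Adj v (u : α)) (by intro u; simp)]
        apply Finset.sum_congr rfl
        intro q _
        simp only [hy]
        rw [dif_pos q.2]
      have hWyC : ∀ p : σ, (W *ᵥ y) (p : ↥s') = (C *ᵥ yS) p := by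
        intro p
        show (∑ u, W (p : ↥s') u * y u) = _
        rw [hsum (W (p : ↥s'))]
        rfl
      have hWyX : ∀ p : σ, (W *ᵥ y) (p : ↥s') = X v ((p : ↥s') : α) := by
        intro p
        rw [hWyC p, hCy]
      have hyWy : y ⬝ᵥ (W *ᵥ y) ≤ X v v := by
        have h1 : y ⬝ᵥ (W *ᵥ y) = ∑ u, (W *ᵥ y) u * y u := by
          simp [dotProduct, mul_comm]
        rw [h1, hsum (W *ᵥ y)]
        have h2 : (∑ q : σ, (W *ᵥ y) (q : ↥s') * yS q) = yS ⬝ᵥ (C *ᵥ yS) := by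
          simp only [dotProduct]
          apply Finset.sum_congr rfl
          intro q _
          rw [hWyC q, mul_comm]
        rw [h2]
        exact hyCy
      have hM : (border (X v v) (W *ᵥ y) W).PosSemidef :=
        border_posSemidef hWpsd y (X v v) hyWy
      set e : α → Option (↥s') := fun i => if h : i = v then none else some ⟨i, h⟩ with he
      refine ⟨(border (X v v) (W *ᵥ y) W).submatrix e e, hM.submatrix e, ?_⟩
      intro i j hij
      simp only [Matrix.submatrix_apply]
      by_cases hi : i = v
      · by_cases hj : j = v
        · simp only [he]
          rw [dif_pos hi, dif_pos hj]
          show X v v = X i j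
          rw [hi, hj]
        · have hadj : G.Adj v j := by
            rcases hij with h | h
            · exact absurd (hi ▸ h : (v:α) = j).symm hj
            · exact hi ▸ h
          simp only [he]
          rw [dif_pos hi, dif_neg hj]
          show (W *ᵥ y) ⟨j, hj⟩ = X i j
          rw [hWyX ⟨⟨j, hj⟩, hadj⟩, hi]
      · by_cases hj : j = v
        · have hadj : G.Adj v i := by
            rcases hij with h | h
            · exact absurd (hj ▸ h : i = (v:α)) hi
            · exact hj ▸ h.symm
          simp only [he]
          rw [dif_neg hi, dif_pos hj]
          show (W *ᵥ y) ⟨i, hi⟩ = X i j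
          rw [hWyX ⟨⟨i, hi⟩, hadj⟩, hj]
          exact hXs i v
        · simp only [he]
          rw [dif_neg hi, dif_neg hj]
          show W ⟨i, hi⟩ ⟨j, hj⟩ = X i j
          rcases hij with h | h
          · exact hWagree _ _ (Or.inl (Subtype.ext h))
          · exact hWagree _ _ (Or.inr (hadj' _ _ h))

end MainPSD

theorem stmt12 {p l : ℕ} (V : Set (Fin p × Fin p))
    (hs : ∀ i j, (i, j) ∈ V → (j, i) ∈ V)
    (hdiag : ∀ i, (i, i) ∈ V)
    (hchordal : Chordal (spGraph V hs))
    (β : Fin l → Finset (Fin p))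
    (hcliques : ∀ k, IsMaxClique (spGraph V hs) (β k))
    (hall : ∀ s : Finset (Fin p), IsMaxClique (spGraph V hs) s → ∃ k, s = β k)
    (X : Matrix (Fin p) (Fin p) ℝ) (hXsymm : X.IsSymm)
    (hXsp : ∀ i j, (i, j) ∉ V → X i j = 0) :
    (∃ Z : Matrix (Fin p) (Fin p) ℝ, Z.PosSemidef ∧
        ∀ i j, (i, j) ∈ V → Z i j = X i j)
    ↔ ∀ k, (X.submatrix (fun i : {a // a ∈ β k} => (i : Fin p))
              (fun j : {a // a ∈ β k} => (j : Fin p))).PosSemidef := by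
  classical
  have hcg : ChordalAux.ChordalG (spGraph V hs) := hchordal
  constructor
  · rintro ⟨Z, hZpsd, hZagree⟩ k
    have hclique : (spGraph V hs).IsClique (β k : Set (Fin p)) := (hcliques k).1
    have hXZ : X.submatrix (fun i : {a // a ∈ β k} => (i : Fin p))
        (fun j : {a // a ∈ β k} => (j : Fin p))
        = Z.submatrix (fun i : {a // a ∈ β k} => (i : Fin p))
            (fun j : {a // a ∈ β k} => (j : Fin p)) := by
      ext i j
      rw [Matrix.submatrix_apply, Matrix.submatrix_apply]
      by_cases hij : (i : Fin p) = (j : Fin p)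
      · rw [hij]
        exact (hZagree _ _ (hdiag _)).symm
      · have hadj : (i : Fin p) ≠ j ∧ ((i : Fin p), (j : Fin p)) ∈ V := hclique (Finset.mem_coe.mpr i.2) (Finset.mem_coe.mpr j.2) hij
        exact (hZagree _ _ hadj.2).symm
    rw [hXZ]
    exact hZpsd.submatrix _
  · intro hβ
    have hallclq : ∀ s : Finset (Fin p), (spGraph V hs).IsClique (s : Set (Fin p)) →
        (X.submatrix (fun i : {a // a ∈ s} => (i : Fin p))
          (fun j : {a // a ∈ s} => (j : Fin p))).PosSemidef := by
      intro s hsclq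
      obtain ⟨t, ⟨htclq, hst⟩, hmax⟩ := Set.Finite.exists_maximalFor id
        {t : Finset (Fin p) | (spGraph V hs).IsClique (t : Set (Fin p)) ∧ s ⊆ t}
        (Set.toFinite _) ⟨s, hsclq, Finset.Subset.refl s⟩
      have htmaxclq : IsMaxClique (spGraph V hs) t :=
        ⟨htclq, fun t' hct' hsub => Finset.Subset.antisymm hsub (hmax ⟨hct', hst.trans hsub⟩ hsub)⟩
      obtain ⟨k, hk⟩ := hall t htmaxclq
      subst hk
      have hmem : ∀ i : {a // a ∈ s}, (i : Fin p) ∈ β k := fun i => hst i.2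
      have key : X.submatrix (fun i : {a // a ∈ s} => (i : Fin p))
          (fun j : {a // a ∈ s} => (j : Fin p))
          = (X.submatrix (fun i : {a // a ∈ β k} => (i : Fin p))
              (fun j : {a // a ∈ β k} => (j : Fin p))).submatrix
            (fun i : {a // a ∈ s} => (⟨(i : Fin p), hmem i⟩ : {a // a ∈ β k}))
            (fun j : {a // a ∈ s} => (⟨(j : Fin p), hmem j⟩ : {a // a ∈ β k})) := by
        ext i j
        rfl
      rw [key]
      exact (hβ k).submatrix _
    obtain ⟨Z, hZ, hZag⟩ := MainPSD.main_psd (Fintype.card (Fin p)) (Fin p)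
      inferInstance inferInstance (spGraph V hs) X le_rfl hcg hXsymm hallclq
    refine ⟨Z, hZ, ?_⟩
    intro i j hij
    by_cases h : i = j
    · exact hZag i j (Or.inl h)
    · exact hZag i j (Or.inr (show i ≠ j ∧ (i, j) ∈ V from ⟨h, hij⟩))
end

section
/- Let V be a chordal symmetric sparsity pattern of order p containing all diagonal entries, with cliques β_1,...,β_l. Then the cone of positive semidefinite matrices with sparsity pattern V equals the set of sums ∑_{k=1}^l E_{β_k}^T S̃_k E_{β_k} where each S̃_k is a |β_k| × |β_k| positive semidefinite matrix. That is, every positive semidefinite matrix S ∈ S^p_V decomposes as a sum of positive semidefinite matrices each supported on a single clique block β_k × β_k. -/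
/-- Embedding of a matrix indexed by a clique `β` into the `β × β` principal block of a
`p × p` matrix (`E_βᵀ Y E_β`). -/
def cliqueEmbed {p : ℕ} (β : Finset (Fin p))
    (Y : Matrix {a // a ∈ β} {a // a ∈ β} ℝ) : Matrix (Fin p) (Fin p) ℝ :=
  fun i j => if hi : i ∈ β then (if hj : j ∈ β then Y ⟨i, hi⟩ ⟨j, hj⟩ else 0) else 0

open SimpleGraph in
/-- Induced subgraph on a finset, as a graph on the same vertex type. -/
def indG {p : ℕ} (G : SimpleGraph (Fin p)) (A : Finset (Fin p)) : SimpleGraph (Fin p) where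
  Adj i j := G.Adj i j ∧ i ∈ A ∧ j ∈ A
  symm := ⟨fun i j h => ⟨h.1.symm, h.2.2, h.2.1⟩⟩
  loopless := ⟨fun i h => G.loopless.irrefl i h.1⟩

lemma indG_le {p : ℕ} (G : SimpleGraph (Fin p)) (A : Finset (Fin p)) : indG G A ≤ G :=
  fun _ _ h => h.1

lemma indG_mono {p : ℕ} (G : SimpleGraph (Fin p)) {A B : Finset (Fin p)} (h : A ⊆ B) :
    indG G A ≤ indG G B := fun _ _ hadj => ⟨hadj.1, h hadj.2.1, h hadj.2.2⟩

lemma mem_of_mem_support_indG {p : ℕ} {G : SimpleGraph (Fin p)} {A : Finset (Fin p)}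
    {u u' : Fin p} (w : (indG G A).Walk u u') (hw : ¬ w.Nil) :
    ∀ x ∈ w.support, x ∈ A := by
  induction w with
  | nil => simp at hw
  | cons h q ih =>
    intro x hx
    rw [SimpleGraph.Walk.support_cons] at hx
    rcases List.mem_cons.mp hx with rfl | hx
    · exact h.2.1
    · cases q with
      | nil => simp at hx; subst hx; exact h.2.2
      | cons h' q' => exact ih SimpleGraph.Walk.not_nil_cons x hx

lemma chordal_indG {p : ℕ} {G : SimpleGraph (Fin p)} (hc : Chordal G) (A : Finset (Fin p)) :
    Chordal (indG G A) := by
  intro v w hcyc hlen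
  have hle := indG_le G A
  let w' : G.Walk v v := w.mapLe hle
  have hcyc' : w'.IsCycle := hcyc.mapLe hle
  have hlen' : 3 < w'.length := by
    simpa [w', SimpleGraph.Walk.length_map] using hlen
  obtain ⟨a, b, ha, hb, hadj, hne⟩ := hc v w' hcyc' hlen'
  have hid : ⇑(SimpleGraph.Hom.ofLE hle) = id := rfl
  have hsupp : w'.support = w.support := by
    simp [w', SimpleGraph.Walk.support_map, hid]
  have hedges : w'.edges = w.edges := by
    simp [w', SimpleGraph.Walk.edges_map, hid, Sym2.map_id']
  rw [hsupp] at ha hb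
  rw [hedges] at hne
  have hnotnil : ¬ w.Nil := by
    intro h; rw [SimpleGraph.Walk.nil_iff_length_eq] at h; omega
  refine ⟨a, b, ha, hb, ⟨hadj, ?_, ?_⟩, hne⟩
  · exact mem_of_mem_support_indG w hnotnil a ha
  · exact mem_of_mem_support_indG w hnotnil b hb

open SimpleGraph Walk in
lemma edge_of_length_one {p : ℕ} {K : SimpleGraph (Fin p)} {c d : Fin p}
    (t : K.Walk c d) (h1 : t.length = 1) : s(c, d) ∈ t.edges := by
  cases t with
  | nil => simp at h1
  | @cons _ d' _ h' q =>
    have hq : q.length = 0 := by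
      rw [Walk.length_cons] at h1; omega
    have hd' : d' = d := Walk.eq_of_length_eq_zero hq
    subst hd'
    simp [Walk.edges_cons]

open SimpleGraph Walk in
lemma geodesic_chord_aux {p : ℕ} {K : SimpleGraph (Fin p)} {u v c d : Fin p}
    (P : K.Walk u v) (hmin : ∀ Q : K.Walk u v, P.length ≤ Q.length)
    (hc : c ∈ P.support) (hadj : K.Adj c d)
    (hd : d ∈ (P.dropUntil c hc).support) : s(c, d) ∈ P.edges := by
  have hPlen : (P.takeUntil c hc).length + (P.dropUntil c hc).length = P.length := by
    have := congrArg Walk.length (P.take_spec hc)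
    rwa [Walk.length_append] at this
  have hW2len : ((P.dropUntil c hc).takeUntil d hd).length
      + ((P.dropUntil c hc).dropUntil d hd).length = (P.dropUntil c hc).length := by
    have := congrArg Walk.length ((P.dropUntil c hc).take_spec hd)
    rwa [Walk.length_append] at this
  have hle := hmin ((P.takeUntil c hc).append
    (Walk.cons hadj ((P.dropUntil c hc).dropUntil d hd)))
  rw [Walk.length_append, Walk.length_cons] at hle
  have htpos : ((P.dropUntil c hc).takeUntil d hd).length ≠ 0 := by
    intro h0
    exact hadj.ne (Walk.eq_of_length_eq_zero h0)
  have ht1 : ((P.dropUntil c hc).takeUntil d hd).length = 1 := by omega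
  have hmem := edge_of_length_one _ ht1
  have h1 : s(c, d) ∈ (P.dropUntil c hc).edges :=
    (P.dropUntil c hc).edges_takeUntil_subset hd hmem
  exact P.edges_dropUntil_subset hc h1

open SimpleGraph Walk in
lemma geodesic_chord {p : ℕ} {K : SimpleGraph (Fin p)} {u v c d : Fin p}
    (P : K.Walk u v) (hmin : ∀ Q : K.Walk u v, P.length ≤ Q.length)
    (hc : c ∈ P.support) (hd : d ∈ P.support) (hadj : K.Adj c d) : s(c, d) ∈ P.edges := by
  by_cases hcase : d ∈ (P.dropUntil c hc).support
  · exact geodesic_chord_aux P hmin hc hadj hcase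
  · have hdT : d ∈ (P.takeUntil c hc).support := by
      have := P.take_spec hc
      rw [← this, Walk.mem_support_append_iff] at hd
      tauto
    set T := P.takeUntil c hc with hT
    have hminT : ∀ Q : K.Walk u c, T.length ≤ Q.length := by
      intro Q
      by_contra hlt
      push_neg at hlt
      have := hmin (Q.append (P.dropUntil c hc))
      have hPlen : T.length + (P.dropUntil c hc).length = P.length := by
        have := congrArg Walk.length (P.take_spec hc)
        rwa [Walk.length_append] at this
      rw [Walk.length_append] at this
      omega
    have hcT : c ∈ (T.dropUntil d hdT).support := Walk.end_mem_support _
    have := geodesic_chord_aux T hminT hdT hadj.symm hcT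
    have hsub : T.edges ⊆ P.edges := P.edges_takeUntil_subset hc
    have := hsub this
    rwa [Sym2.eq_swap] at this

open SimpleGraph in
lemma walk_support_closed {p : ℕ} {K : SimpleGraph (Fin p)} {Ca : Set (Fin p)}
    (hcl : ∀ x y, x ∈ Ca → K.Adj x y → y ∈ Ca) :
    ∀ {u v : Fin p} (W : K.Walk u v), u ∈ Ca → ∀ z ∈ W.support, z ∈ Ca := by
  intro u v W
  induction W with
  | nil => intro hu z hz; simp at hz; subst hz; exact hu
  | cons h q ih =>
    intro hu z hz
    rw [SimpleGraph.Walk.support_cons] at hz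
    rcases List.mem_cons.mp hz with rfl | hz
    · exact hu
    · exact ih (hcl _ _ hu h) z hz

open SimpleGraph in
lemma support_mapLe_eq {p : ℕ} {K K' : SimpleGraph (Fin p)} (h : K ≤ K') {u v : Fin p}
    (W : K.Walk u v) : (W.mapLe h).support = W.support := by
  have hid : ⇑(SimpleGraph.Hom.ofLE h) = id := rfl
  simp [SimpleGraph.Walk.mapLe, SimpleGraph.Walk.support_map, hid]

open SimpleGraph in
lemma edges_mapLe_eq {p : ℕ} {K K' : SimpleGraph (Fin p)} (h : K ≤ K') {u v : Fin p}
    (W : K.Walk u v) : (W.mapLe h).edges = W.edges := by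
  have hid : ⇑(SimpleGraph.Hom.ofLE h) = id := rfl
  simp [SimpleGraph.Walk.mapLe, SimpleGraph.Walk.edges_map, hid, Sym2.map_id']

open SimpleGraph in
lemma length_mapLe_eq {p : ℕ} {K K' : SimpleGraph (Fin p)} (h : K ≤ K') {u v : Fin p}
    (W : K.Walk u v) : (W.mapLe h).length = W.length := by
  simp [SimpleGraph.Walk.mapLe, SimpleGraph.Walk.length_map]

open SimpleGraph in
/-- A walk whose support lies in a set where adjacency transfers to `K'` transfers. -/
lemma reachable_transfer {p : ℕ} {K K' : SimpleGraph (Fin p)} {u v : Fin p}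
    (W : K.Walk u v) (h : ∀ c d, K.Adj c d → c ∈ W.support → d ∈ W.support → K'.Adj c d) :
    K'.Reachable u v := by
  refine ⟨W.transfer K' ?_⟩
  intro e he
  induction e with
  | h c d =>
    exact h c d (W.adj_of_mem_edges he) (W.fst_mem_support_of_mem_edges he)
      (W.snd_mem_support_of_mem_edges he)

open SimpleGraph in
lemma sep_neighbor {p : ℕ} (G : SimpleGraph (Fin p)) (A S : Finset (Fin p)) (a b x : Fin p)
    (hSA : S ⊆ A) (haA : a ∈ A) (haS : a ∉ S) (hbS : b ∉ S)
    (hsep : ¬ (indG G (A \ S)).Reachable a b)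
    (hmin : ∀ T : Finset (Fin p), T ⊆ A → a ∉ T → b ∉ T →
      ¬ (indG G (A \ T)).Reachable a b → S.card ≤ T.card)
    (hx : x ∈ S) : ∃ x', G.Adj x x' ∧ (indG G (A \ S)).Reachable a x' := by
  by_contra hno
  push_neg at hno
  set H := indG G (A \ S) with hH
  set Ca : Set (Fin p) := {z | H.Reachable a z} with hCa
  have hCaCl : ∀ y z, y ∈ Ca → H.Adj y z → z ∈ Ca :=
    fun y z hy hadj => hy.trans ⟨hadj.toWalk⟩
  have hsep' : ¬ (indG G (A \ S.erase x)).Reachable a b := by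
    intro hreach
    have hxCa : x ∉ Ca := by
      intro hxc
      have : x ∈ A \ S := by
        obtain ⟨W⟩ := hxc
        cases W with
        | nil => exact absurd hx haS
        | cons h q =>
          exact mem_of_mem_support_indG (SimpleGraph.Walk.cons h q) (by simp) x
            (SimpleGraph.Walk.end_mem_support _)
      exact (Finset.mem_sdiff.mp this).2 hx
    have hcl' : ∀ y z, y ∈ Ca → (indG G (A \ S.erase x)).Adj y z → z ∈ Ca := by
      intro y z hy hadj
      by_cases hzx : z = x
      · subst hzx
        exact absurd hy (hno y hadj.1.symm)
      · have hz : z ∈ A \ S := by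
          have hz' := Finset.mem_sdiff.mp hadj.2.2
          exact Finset.mem_sdiff.mpr ⟨hz'.1, fun hzS => hz'.2 (Finset.mem_erase.mpr ⟨hzx, hzS⟩)⟩
        have hy' : y ∈ A \ S := by
          obtain ⟨W⟩ := hy
          cases W with
          | nil => exact Finset.mem_sdiff.mpr ⟨haA, haS⟩
          | cons h q =>
            exact mem_of_mem_support_indG (SimpleGraph.Walk.cons h q) (by simp) y
              (SimpleGraph.Walk.end_mem_support _)
        exact hCaCl y z hy ⟨hadj.1, hy', hz⟩
    obtain ⟨W⟩ := hreach
    exact hsep (walk_support_closed hcl' W (SimpleGraph.Reachable.refl a) b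
      (SimpleGraph.Walk.end_mem_support _))
  have hcard := hmin (S.erase x) ((S.erase_subset x).trans hSA)
    (fun h => haS (S.erase_subset x h)) (fun h => hbS (S.erase_subset x h)) hsep'
  have := Finset.card_erase_of_mem hx
  have hpos : 0 < S.card := Finset.card_pos.mpr ⟨x, hx⟩
  omega

open SimpleGraph in
lemma reach_mem {p : ℕ} {G : SimpleGraph (Fin p)} {B : Finset (Fin p)} {u z : Fin p}
    (h : (indG G B).Reachable u z) (hu : u ∈ B) : z ∈ B := by
  obtain ⟨W⟩ := h
  cases W with
  | nil => exact hu
  | cons h q =>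
    exact mem_of_mem_support_indG (SimpleGraph.Walk.cons h q) (by simp) z
      (SimpleGraph.Walk.end_mem_support _)

open SimpleGraph in
lemma sep_clique {p : ℕ} (G : SimpleGraph (Fin p)) (hc : Chordal G)
    (A S : Finset (Fin p)) (a b : Fin p)
    (hSA : S ⊆ A) (haA : a ∈ A) (hbA : b ∈ A) (haS : a ∉ S) (hbS : b ∉ S)
    (hsep : ¬ (indG G (A \ S)).Reachable a b)
    (hmin : ∀ T : Finset (Fin p), T ⊆ A → a ∉ T → b ∉ T →
      ¬ (indG G (A \ T)).Reachable a b → S.card ≤ T.card)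
    {x y : Fin p} (hx : x ∈ S) (hy : y ∈ S) (hxy : x ≠ y) : G.Adj x y := by
  classical
  by_contra hnadj
  set H := indG G (A \ S) with hH
  set Ca : Set (Fin p) := {z | H.Reachable a z} with hCa
  set Cb : Set (Fin p) := {z | H.Reachable b z} with hCb
  have hCaCl : ∀ u z, u ∈ Ca → H.Adj u z → z ∈ Ca := fun u z hu hadj => hu.trans ⟨hadj.toWalk⟩
  have hCbCl : ∀ u z, u ∈ Cb → H.Adj u z → z ∈ Cb := fun u z hu hadj => hu.trans ⟨hadj.toWalk⟩
  have haB : a ∈ A \ S := Finset.mem_sdiff.mpr ⟨haA, haS⟩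
  have hbB : b ∈ A \ S := Finset.mem_sdiff.mpr ⟨hbA, hbS⟩
  have hCaB : ∀ z ∈ Ca, z ∈ A \ S := fun z hz => reach_mem hz haB
  have hCbB : ∀ z ∈ Cb, z ∈ A \ S := fun z hz => reach_mem hz hbB
  have hdisj : ∀ z, z ∈ Ca → z ∈ Cb → False := fun z hza hzb => hsep (hza.trans hzb.symm)
  have hxCa : x ∉ Ca := fun h => (Finset.mem_sdiff.mp (hCaB x h)).2 hx
  have hyCa : y ∉ Ca := fun h => (Finset.mem_sdiff.mp (hCaB y h)).2 hy
  have hxCb : x ∉ Cb := fun h => (Finset.mem_sdiff.mp (hCbB x h)).2 hx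
  have hyCb : y ∉ Cb := fun h => (Finset.mem_sdiff.mp (hCbB y h)).2 hy
  have hsep_b : ¬ (indG G (A \ S)).Reachable b a := fun h => hsep h.symm
  have hmin_b : ∀ T : Finset (Fin p), T ⊆ A → b ∉ T → a ∉ T →
      ¬ (indG G (A \ T)).Reachable b a → S.card ≤ T.card :=
    fun T h1 h2 h3 h4 => hmin T h1 h3 h2 (fun hr => h4 hr.symm)
  obtain ⟨x', hxx', hx'Ca⟩ := sep_neighbor G A S a b x hSA haA haS hbS hsep hmin hx
  obtain ⟨y', hyy', hy'Ca⟩ := sep_neighbor G A S a b y hSA haA haS hbS hsep hmin hy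
  obtain ⟨x'', hxx'', hx''Cb⟩ := sep_neighbor G A S b a x hSA hbA hbS haS hsep_b hmin_b hx
  obtain ⟨y'', hyy'', hy''Cb⟩ := sep_neighbor G A S b a y hSA hbA hbS haS hsep_b hmin_b hy
  -- the two side graphs
  set SAf : Finset (Fin p) := (Finset.univ.filter (· ∈ Ca)) ∪ {x, y} with hSAfdef
  set SBf : Finset (Fin p) := (Finset.univ.filter (· ∈ Cb)) ∪ {x, y} with hSBfdef
  have hSAf_iff : ∀ z, z ∈ SAf ↔ (z ∈ Ca ∨ z = x ∨ z = y) := by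
    intro z
    simp [hSAfdef, Finset.mem_union, Finset.mem_filter, Finset.mem_insert, Finset.mem_singleton]
    tauto
  have hSBf_iff : ∀ z, z ∈ SBf ↔ (z ∈ Cb ∨ z = x ∨ z = y) := by
    intro z
    simp [hSBfdef, Finset.mem_union, Finset.mem_filter, Finset.mem_insert, Finset.mem_singleton]
    tauto
  have hSAfA : SAf ⊆ A := by
    intro z hz
    rcases (hSAf_iff z).mp hz with h | rfl | rfl
    · exact (Finset.mem_sdiff.mp (hCaB z h)).1
    · exact hSA hx
    · exact hSA hy
  have hSBfA : SBf ⊆ A := by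
    intro z hz
    rcases (hSBf_iff z).mp hz with h | rfl | rfl
    · exact (Finset.mem_sdiff.mp (hCbB z h)).1
    · exact hSA hx
    · exact hSA hy
  set KA := indG G SAf with hKA
  set KB := indG G SBf with hKB
  have hxSAf : x ∈ SAf := (hSAf_iff x).mpr (Or.inr (Or.inl rfl))
  have hySAf : y ∈ SAf := (hSAf_iff y).mpr (Or.inr (Or.inr rfl))
  have hxSBf : x ∈ SBf := (hSBf_iff x).mpr (Or.inr (Or.inl rfl))
  have hySBf : y ∈ SBf := (hSBf_iff y).mpr (Or.inr (Or.inr rfl))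
  -- reachability x … y inside KA
  have hreachA : KA.Reachable x y := by
    have hadj1 : KA.Adj x x' := ⟨hxx', hxSAf, (hSAf_iff x').mpr (Or.inl hx'Ca)⟩
    have h1 : KA.Reachable x x' := ⟨hadj1.toWalk⟩
    have h2 : KA.Reachable x' y' := by
      obtain ⟨W⟩ := hx'Ca.symm.trans hy'Ca
      have hWs : ∀ z ∈ W.support, z ∈ Ca := walk_support_closed hCaCl W hx'Ca
      exact reachable_transfer W (fun c d hcd hcs hds =>
        ⟨hcd.1, (hSAf_iff c).mpr (Or.inl (hWs c hcs)), (hSAf_iff d).mpr (Or.inl (hWs d hds))⟩)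
    have hadj3 : KA.Adj y y' := ⟨hyy', hySAf, (hSAf_iff y').mpr (Or.inl hy'Ca)⟩
    have h3 : KA.Reachable y' y := ⟨hadj3.toWalk.reverse⟩
    exact (h1.trans h2).trans h3
  have hreachB : KB.Reachable x y := by
    have hadj1 : KB.Adj x x'' := ⟨hxx'', hxSBf, (hSBf_iff x'').mpr (Or.inl hx''Cb)⟩
    have h1 : KB.Reachable x x'' := ⟨hadj1.toWalk⟩
    have h2 : KB.Reachable x'' y'' := by
      obtain ⟨W⟩ := hx''Cb.symm.trans hy''Cb
      have hWs : ∀ z ∈ W.support, z ∈ Cb := walk_support_closed hCbCl W hx''Cb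
      exact reachable_transfer W (fun c d hcd hcs hds =>
        ⟨hcd.1, (hSBf_iff c).mpr (Or.inl (hWs c hcs)), (hSBf_iff d).mpr (Or.inl (hWs d hds))⟩)
    have hadj3 : KB.Adj y y'' := ⟨hyy'', hySBf, (hSBf_iff y'').mpr (Or.inl hy''Cb)⟩
    have h3 : KB.Reachable y'' y := ⟨hadj3.toWalk.reverse⟩
    exact (h1.trans h2).trans h3
  -- geodesics
  obtain ⟨W0, hW0⟩ := hreachA.exists_walk_length_eq_dist
  set P : KA.Walk x y := W0.bypass with hPdef
  have hPpath : P.IsPath := W0.bypass_isPath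
  have hPlen : P.length = KA.dist x y :=
    le_antisymm (hW0 ▸ SimpleGraph.Walk.length_bypass_le W0) (SimpleGraph.dist_le P)
  have hminP : ∀ Q' : KA.Walk x y, P.length ≤ Q'.length :=
    fun Q' => hPlen ▸ SimpleGraph.dist_le Q'
  obtain ⟨W1, hW1⟩ := hreachB.exists_walk_length_eq_dist
  set Q : KB.Walk x y := W1.bypass with hQdef
  have hQpath : Q.IsPath := W1.bypass_isPath
  have hQlen : Q.length = KB.dist x y :=
    le_antisymm (hW1 ▸ SimpleGraph.Walk.length_bypass_le W1) (SimpleGraph.dist_le Q)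
  have hminQ : ∀ Q' : KB.Walk x y, Q.length ≤ Q'.length :=
    fun Q' => hQlen ▸ SimpleGraph.dist_le Q'
  -- lengths at least 2
  have hP2 : 2 ≤ P.length := by
    rcases Nat.lt_or_ge P.length 2 with h | h
    · interval_cases h' : P.length
      · exact absurd (SimpleGraph.Walk.eq_of_length_eq_zero h') hxy
      · exact absurd (P.adj_of_mem_edges (edge_of_length_one P h')).1 hnadj
    · exact h
  have hQ2 : 2 ≤ Q.length := by
    rcases Nat.lt_or_ge Q.length 2 with h | h
    · interval_cases h' : Q.length
      · exact absurd (SimpleGraph.Walk.eq_of_length_eq_zero h') hxy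
      · exact absurd (Q.adj_of_mem_edges (edge_of_length_one Q h')).1 hnadj
    · exact h
  have hPsupp : ∀ z ∈ P.support, z ∈ SAf := by
    apply mem_of_mem_support_indG P
    rw [SimpleGraph.Walk.nil_iff_length_eq]; omega
  have hQsupp : ∀ z ∈ Q.support, z ∈ SBf := by
    apply mem_of_mem_support_indG Q
    rw [SimpleGraph.Walk.nil_iff_length_eq]; omega
  -- build the cycle
  have hleA : KA ≤ indG G A := fun c d h => ⟨h.1, hSAfA h.2.1, hSAfA h.2.2⟩
  have hleB : KB ≤ indG G A := fun c d h => ⟨h.1, hSBfA h.2.1, hSBfA h.2.2⟩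
  set P1 : (indG G A).Walk x y := P.mapLe hleA with hP1def
  set Q1 : (indG G A).Walk x y := Q.mapLe hleB with hQ1def
  have hP1supp : P1.support = P.support := support_mapLe_eq hleA P
  have hQ1supp : Q1.support = Q.support := support_mapLe_eq hleB Q
  have hP1edges : P1.edges = P.edges := edges_mapLe_eq hleA P
  have hQ1edges : Q1.edges = Q.edges := edges_mapLe_eq hleB Q
  have hP1path : P1.IsPath := (SimpleGraph.Walk.mapLe_isPath hleA).mpr hPpath
  have hQ1path : Q1.IsPath := (SimpleGraph.Walk.mapLe_isPath hleB).mpr hQpath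
  set W : (indG G A).Walk x x := P1.append Q1.reverse with hWdef
  have hWsupp : W.support = P1.support ++ Q1.reverse.support.tail :=
    SimpleGraph.Walk.support_append _ _
  have memW : ∀ z ∈ W.support, z ∈ P.support ∨ z ∈ Q.support := by
    intro z hz
    rw [hWsupp, List.mem_append] at hz
    rcases hz with hz | hz
    · exact Or.inl (hP1supp ▸ hz)
    · right
      have := List.mem_of_mem_tail hz
      rw [SimpleGraph.Walk.support_reverse, List.mem_reverse] at this
      exact hQ1supp ▸ this
  have hPQ : ∀ z, z ∈ P.support → z ∈ Q.support → z = x ∨ z = y := by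
    intro z hzP hzQ
    rcases (hSAf_iff z).mp (hPsupp z hzP) with h | h | h
    · rcases (hSBf_iff z).mp (hQsupp z hzQ) with h' | h' | h'
      · exact absurd h' (fun h'' => hdisj z h h'')
      · exact Or.inl h'
      · exact Or.inr h'
    · exact Or.inl h
    · exact Or.inr h
  have hWedges : W.edges = P1.edges ++ Q1.reverse.edges := SimpleGraph.Walk.edges_append _ _
  have hedgeP : ∀ e ∈ P.edges, e ∈ W.edges := by
    intro e he; rw [hWedges, List.mem_append]; exact Or.inl (hP1edges ▸ he)
  have hedgeQ : ∀ e ∈ Q.edges, e ∈ W.edges := by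
    intro e he; rw [hWedges, List.mem_append]
    right
    rw [SimpleGraph.Walk.edges_reverse, List.mem_reverse]
    exact hQ1edges ▸ he
  -- cycle
  have hWlen : W.length = P.length + Q.length := by
    rw [hWdef, SimpleGraph.Walk.length_append, SimpleGraph.Walk.length_reverse,
      length_mapLe_eq, length_mapLe_eq]
  have hcyc : W.IsCycle := by
    refine ⟨⟨⟨?_⟩, ?_⟩, ?_⟩
    · -- edges nodup
      rw [hWedges]
      rw [List.nodup_append]
      refine ⟨hP1path.isTrail.edges_nodup, hQ1path.reverse.isTrail.edges_nodup, ?_⟩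
      intro e heP e' heQ hee
      subst hee
      rw [hP1edges] at heP
      rw [SimpleGraph.Walk.edges_reverse, List.mem_reverse, hQ1edges] at heQ
      induction e with
      | h c d =>
        have hcd : KA.Adj c d := P.adj_of_mem_edges heP
        have hcs : c ∈ P.support := P.fst_mem_support_of_mem_edges heP
        have hds : d ∈ P.support := P.snd_mem_support_of_mem_edges heP
        have hcs' : c ∈ Q.support := Q.fst_mem_support_of_mem_edges heQ
        have hds' : d ∈ Q.support := Q.snd_mem_support_of_mem_edges heQ
        rcases hPQ c hcs hcs' with rfl | rfl <;> rcases hPQ d hds hds' with rfl | rfl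
        · exact hcd.ne rfl
        · exact hnadj hcd.1
        · exact hnadj hcd.1.symm
        · exact hcd.ne rfl
    · -- not nil
      intro h
      have := congrArg SimpleGraph.Walk.length h
      rw [hWlen] at this
      rw [SimpleGraph.Walk.length_nil] at this
      omega
    · -- support tail nodup
      have hW2 : W.support.tail = P1.support.tail ++ Q1.reverse.support.tail := by
        rw [hWsupp, SimpleGraph.Walk.support_eq_cons P1]
        rfl
      rw [hW2, List.nodup_append]
      have hPn : P1.support.Nodup := hP1path.support_nodup
      have hQn : Q1.reverse.support.Nodup := hQ1path.reverse.support_nodup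
      refine ⟨hPn.tail, hQn.tail, ?_⟩
      intro z hzP z' hzQ hzz
      subst hzz
      have hzP' : z ∈ P.support := hP1supp ▸ List.mem_of_mem_tail hzP
      have hzQ' : z ∈ Q.support := by
        have := List.mem_of_mem_tail hzQ
        rw [SimpleGraph.Walk.support_reverse, List.mem_reverse] at this
        exact hQ1supp ▸ this
      have hzx : z ≠ x := by
        intro rfl'
        subst rfl'
        have := SimpleGraph.Walk.support_eq_cons P1
        rw [this] at hPn
        exact (List.nodup_cons.mp hPn).1 hzP
      have hzy : z ≠ y := by
        intro rfl'
        subst rfl'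
        have := SimpleGraph.Walk.support_eq_cons Q1.reverse
        rw [this] at hQn
        exact (List.nodup_cons.mp hQn).1 hzQ
      rcases hPQ z hzP' hzQ' with h | h
      · exact hzx h
      · exact hzy h
  -- chordality
  obtain ⟨c, d, hcW, hdW, hcd, hne⟩ := chordal_indG hc A x W hcyc (by omega)
  have hGcd : G.Adj c d := hcd.1
  have caseA : (c ∈ Ca ∨ c = x ∨ c = y) → (d ∈ Ca ∨ d = x ∨ d = y) → False := by
    intro hcA hdA
    have hcP : c ∈ P.support := by
      rcases memW c hcW with h | h
      · exact h
      · rcases (hSBf_iff c).mp (hQsupp c h) with h' | rfl | rfl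
        · rcases hcA with h'' | rfl | rfl
          · exact absurd h' (fun hq => hdisj c h'' hq)
          · exact absurd h' hxCb
          · exact absurd h' hyCb
        · exact P.start_mem_support
        · exact P.end_mem_support
    have hdP : d ∈ P.support := by
      rcases memW d hdW with h | h
      · exact h
      · rcases (hSBf_iff d).mp (hQsupp d h) with h' | rfl | rfl
        · rcases hdA with h'' | rfl | rfl
          · exact absurd h' (fun hq => hdisj d h'' hq)
          · exact absurd h' hxCb
          · exact absurd h' hyCb
        · exact P.start_mem_support
        · exact P.end_mem_support
    have hKAcd : KA.Adj c d := ⟨hGcd, (hSAf_iff c).mpr hcA, (hSAf_iff d).mpr hdA⟩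
    exact hne (hedgeP _ (geodesic_chord P hminP hcP hdP hKAcd))
  have caseB : (c ∈ Cb ∨ c = x ∨ c = y) → (d ∈ Cb ∨ d = x ∨ d = y) → False := by
    intro hcB hdB
    have hcQ : c ∈ Q.support := by
      rcases memW c hcW with h | h
      · rcases (hSAf_iff c).mp (hPsupp c h) with h' | rfl | rfl
        · rcases hcB with h'' | rfl | rfl
          · exact absurd h'' (fun hq => hdisj c h' hq)
          · exact absurd h' hxCa
          · exact absurd h' hyCa
        · exact Q.start_mem_support
        · exact Q.end_mem_support
      · exact h
    have hdQ : d ∈ Q.support := by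
      rcases memW d hdW with h | h
      · rcases (hSAf_iff d).mp (hPsupp d h) with h' | rfl | rfl
        · rcases hdB with h'' | rfl | rfl
          · exact absurd h'' (fun hq => hdisj d h' hq)
          · exact absurd h' hxCa
          · exact absurd h' hyCa
        · exact Q.start_mem_support
        · exact Q.end_mem_support
      · exact h
    have hKBcd : KB.Adj c d := ⟨hGcd, (hSBf_iff c).mpr hcB, (hSBf_iff d).mpr hdB⟩
    exact hne (hedgeQ _ (geodesic_chord Q hminQ hcQ hdQ hKBcd))
  have hmixed : ∀ u z, u ∈ Ca → z ∈ Cb → G.Adj u z → False := by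
    intro u z hu hz hadj
    have : H.Adj u z := ⟨hadj, hCaB u hu, hCbB z hz⟩
    exact hdisj z (hCaCl u z hu this) hz
  have hcClass : c ∈ Ca ∨ c ∈ Cb ∨ (c = x ∨ c = y) := by
    rcases memW c hcW with h | h
    · rcases (hSAf_iff c).mp (hPsupp c h) with h' | h' | h'
      · exact Or.inl h'
      · exact Or.inr (Or.inr (Or.inl h'))
      · exact Or.inr (Or.inr (Or.inr h'))
    · rcases (hSBf_iff c).mp (hQsupp c h) with h' | h' | h'
      · exact Or.inr (Or.inl h')
      · exact Or.inr (Or.inr (Or.inl h'))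
      · exact Or.inr (Or.inr (Or.inr h'))
  have hdClass : d ∈ Ca ∨ d ∈ Cb ∨ (d = x ∨ d = y) := by
    rcases memW d hdW with h | h
    · rcases (hSAf_iff d).mp (hPsupp d h) with h' | h' | h'
      · exact Or.inl h'
      · exact Or.inr (Or.inr (Or.inl h'))
      · exact Or.inr (Or.inr (Or.inr h'))
    · rcases (hSBf_iff d).mp (hQsupp d h) with h' | h' | h'
      · exact Or.inr (Or.inl h')
      · exact Or.inr (Or.inr (Or.inl h'))
      · exact Or.inr (Or.inr (Or.inr h'))
  rcases hcClass with hc1 | hc1 | hc1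
  · rcases hdClass with hd1 | hd1 | hd1
    · exact caseA (Or.inl hc1) (Or.inl hd1)
    · exact hmixed c d hc1 hd1 hGcd
    · exact caseA (Or.inl hc1) (Or.inr hd1)
  · rcases hdClass with hd1 | hd1 | hd1
    · exact hmixed d c hd1 hc1 hGcd.symm
    · exact caseB (Or.inl hc1) (Or.inl hd1)
    · exact caseB (Or.inl hc1) (Or.inr hd1)
  · rcases hdClass with hd1 | hd1 | hd1
    · exact caseA (Or.inr hc1) (Or.inl hd1)
    · exact caseB (Or.inr hc1) (Or.inl hd1)
    · exact caseA (Or.inr hc1) (Or.inr hd1)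

def Simp {p : ℕ} (G : SimpleGraph (Fin p)) (v : Fin p) : Prop :=
  ∀ x y, G.Adj v x → G.Adj v y → x ≠ y → G.Adj x y

open SimpleGraph in
lemma no_reach {p : ℕ} {G : SimpleGraph (Fin p)} {a b : Fin p} (hab : a ≠ b)
    (hnadj : ¬ G.Adj a b) {S' : Finset (Fin p)} (hS : S' ⊆ {a, b}) :
    ¬ (indG G S').Reachable a b := by
  rintro ⟨W⟩
  cases W with
  | nil => exact hab rfl
  | cons h q =>
    rcases Finset.mem_insert.mp (hS h.2.2) with h' | h'
    · exact G.irrefl (h' ▸ h.1)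
    · exact hnadj (Finset.mem_singleton.mp h' ▸ h.1)

open SimpleGraph in
theorem dirac {p : ℕ} (G : SimpleGraph (Fin p)) (hc : Chordal G) (A : Finset (Fin p)) :
    A.Nonempty →
    (∃ v ∈ A, Simp (indG G A) v) ∧
    ((∃ a ∈ A, ∃ b ∈ A, a ≠ b ∧ ¬ G.Adj a b) →
      ∃ v ∈ A, ∃ w ∈ A, v ≠ w ∧ ¬ G.Adj v w ∧ Simp (indG G A) v ∧ Simp (indG G A) w) := by
  classical
  induction A using Finset.strongInductionOn with
  | _ A IH =>
  intro hA
  by_cases hcomplete : ∀ u ∈ A, ∀ z ∈ A, u ≠ z → G.Adj u z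
  · constructor
    · obtain ⟨v, hv⟩ := hA
      exact ⟨v, hv, fun s t hs ht hst =>
        ⟨hcomplete s hs.2.2 t ht.2.2 hst, hs.2.2, ht.2.2⟩⟩
    · rintro ⟨a, haA, b, hbA, hab, hnadj⟩
      exact absurd (hcomplete a haA b hbA hab) hnadj
  · push_neg at hcomplete
    obtain ⟨a, haA, b, hbA, hab, hnadj⟩ := hcomplete
    -- minimal separator
    set Cand := A.powerset.filter
      (fun T => a ∉ T ∧ b ∉ T ∧ ¬ (indG G (A \ T)).Reachable a b) with hCand
    have hCandne : Cand.Nonempty := by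
      refine ⟨A \ {a, b}, Finset.mem_filter.mpr ⟨Finset.mem_powerset.mpr (Finset.sdiff_subset),
        ?_, ?_, ?_⟩⟩
      · simp
      · simp
      · rw [Finset.sdiff_sdiff_self_left]
        exact no_reach hab hnadj (Finset.inter_subset_right)
    obtain ⟨S, hSCand, hminS⟩ := Cand.exists_min_image Finset.card hCandne
    rw [hCand, Finset.mem_filter, Finset.mem_powerset] at hSCand
    obtain ⟨hSA, haS, hbS, hsep⟩ := hSCand
    have hmin : ∀ T : Finset (Fin p), T ⊆ A → a ∉ T → b ∉ T →
        ¬ (indG G (A \ T)).Reachable a b → S.card ≤ T.card := by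
      intro T h1 h2 h3 h4
      exact hminS T (Finset.mem_filter.mpr ⟨Finset.mem_powerset.mpr h1, h2, h3, h4⟩)
    have hclique : ∀ x ∈ S, ∀ y ∈ S, x ≠ y → G.Adj x y :=
      fun x hx y hy hxy => sep_clique G hc A S a b hSA haA hbA haS hbS hsep hmin hx hy hxy
    set H := indG G (A \ S) with hH
    have hCaCl : ∀ u z w, H.Reachable u z → H.Adj z w → H.Reachable u w :=
      fun u z w h1 h2 => h1.trans ⟨h2.toWalk⟩
    set CaF := A.filter (fun z => H.Reachable a z) with hCaF
    set CbF := A.filter (fun z => H.Reachable b z) with hCbF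
    have hdisjC : ∀ z, z ∈ CaF → z ∈ CbF → False := by
      intro z hza hzb
      exact hsep ((Finset.mem_filter.mp hza).2.trans ((Finset.mem_filter.mp hzb).2).symm)
    have hCaB : ∀ z ∈ CaF, z ∈ A \ S :=
      fun z hz => reach_mem (Finset.mem_filter.mp hz).2 (Finset.mem_sdiff.mpr ⟨haA, haS⟩)
    have hCbB : ∀ z ∈ CbF, z ∈ A \ S :=
      fun z hz => reach_mem (Finset.mem_filter.mp hz).2 (Finset.mem_sdiff.mpr ⟨hbA, hbS⟩)
    -- one simplicial vertex on each side
    have side : ∀ (c : Fin p) (CF : Finset (Fin p)), c ∈ A → c ∉ S →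
        (∀ z, z ∈ CF ↔ z ∈ A ∧ H.Reachable c z) →
        (∀ z ∈ CF, z ∈ A \ S) →
        (∃ d ∈ A, d ∉ CF ∪ S) →
        ∃ v ∈ CF, Simp (indG G A) v := by
      intro c CF hcA hcS hCFiff hCFB ⟨d, hdA, hdnot⟩
      set A1 := CF ∪ S with hA1
      have hcCF : c ∈ CF := (hCFiff c).mpr ⟨hcA, SimpleGraph.Reachable.refl c⟩
      have hA1sub : A1 ⊆ A := by
        intro z hz
        rcases Finset.mem_union.mp hz with h | h
        · exact (Finset.mem_sdiff.mp (hCFB z h)).1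
        · exact hSA h
      have hA1ss : A1 ⊂ A := by
        refine ⟨hA1sub, fun h => hdnot (h hdA)⟩
      have hA1ne : A1.Nonempty := ⟨c, Finset.mem_union.mpr (Or.inl hcCF)⟩
      -- lift simpliciality from A1 to A
      have hlift : ∀ v, v ∈ CF → Simp (indG G A1) v → Simp (indG G A) v := by
        intro v hvCF hsimp s t hs ht hst
        have hvB : v ∈ A \ S := hCFB v hvCF
        have hmemA1 : ∀ z, (indG G A).Adj v z → z ∈ A1 := by
          intro z hz
          by_cases hzS : z ∈ S
          · exact Finset.mem_union.mpr (Or.inr hzS)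
          · have hzB : z ∈ A \ S := Finset.mem_sdiff.mpr ⟨hz.2.2, hzS⟩
            have : H.Reachable c z :=
              hCaCl c v z ((hCFiff v).mp hvCF).2 ⟨hz.1, hvB, hzB⟩
            exact Finset.mem_union.mpr (Or.inl ((hCFiff z).mpr ⟨hz.2.2, this⟩))
        have hs1 : (indG G A1).Adj v s :=
          ⟨hs.1, Finset.mem_union.mpr (Or.inl hvCF), hmemA1 s hs⟩
        have ht1 : (indG G A1).Adj v t :=
          ⟨ht.1, Finset.mem_union.mpr (Or.inl hvCF), hmemA1 t ht⟩
        exact ⟨(hsimp s t hs1 ht1 hst).1, hs.2.2, ht.2.2⟩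
      by_cases hcomp1 : ∀ u ∈ A1, ∀ z ∈ A1, u ≠ z → G.Adj u z
      · refine ⟨c, hcCF, hlift c hcCF ?_⟩
        intro s t hs ht hst
        exact ⟨hcomp1 s hs.2.2 t ht.2.2 hst, hs.2.2, ht.2.2⟩
      · push_neg at hcomp1
        obtain ⟨a1, ha1, b1, hb1, hab1, hnadj1⟩ := hcomp1
        obtain ⟨_, hclause⟩ := IH A1 hA1ss hA1ne
        obtain ⟨v, hvA1, w, hwA1, hvw, hnadjvw, hsimpv, hsimpw⟩ :=
          hclause ⟨a1, ha1, b1, hb1, hab1, hnadj1⟩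
        have : v ∈ CF ∨ w ∈ CF := by
          rcases Finset.mem_union.mp hvA1 with h | h
          · exact Or.inl h
          · rcases Finset.mem_union.mp hwA1 with h' | h'
            · exact Or.inr h'
            · exact absurd (hclique v h w h' hvw) hnadjvw
        rcases this with h | h
        · exact ⟨v, h, hlift v h hsimpv⟩
        · exact ⟨w, h, hlift w h hsimpw⟩
    have hbnot : b ∉ CaF ∪ S := by
      intro h
      rcases Finset.mem_union.mp h with h' | h'
      · exact hsep (Finset.mem_filter.mp h').2
      · exact hbS h'
    have hanot : a ∉ CbF ∪ S := by
      intro h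
      rcases Finset.mem_union.mp h with h' | h'
      · exact hsep ((Finset.mem_filter.mp h').2).symm
      · exact haS h'
    obtain ⟨va, hvaCF, hvasimp⟩ := side a CaF haA haS
      (fun z => by simp [hCaF, Finset.mem_filter]) hCaB ⟨b, hbA, hbnot⟩
    obtain ⟨vb, hvbCF, hvbsimp⟩ := side b CbF hbA hbS
      (fun z => by simp [hCbF, Finset.mem_filter]) hCbB ⟨a, haA, hanot⟩
    have hvavb : va ≠ vb := by
      rintro rfl
      exact hdisjC va hvaCF hvbCF
    have hnadjvavb : ¬ G.Adj va vb := by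
      intro h
      have hva : H.Reachable a va := (Finset.mem_filter.mp hvaCF).2
      have hvb' : H.Reachable b vb := (Finset.mem_filter.mp hvbCF).2
      have : H.Adj va vb := ⟨h, hCaB va hvaCF, hCbB vb hvbCF⟩
      exact hsep ((hva.trans ⟨this.toWalk⟩).trans hvb'.symm)
    refine ⟨⟨va, (Finset.mem_sdiff.mp (hCaB va hvaCF)).1, hvasimp⟩, fun _ => ?_⟩
    exact ⟨va, (Finset.mem_sdiff.mp (hCaB va hvaCF)).1, vb,
      (Finset.mem_sdiff.mp (hCbB vb hvbCF)).1, hvavb, hnadjvavb, hvasimp, hvbsimp⟩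

section MatrixLemmas
open Matrix

variable {p : ℕ}

lemma quad_single (S : Matrix (Fin p) (Fin p) ℝ) (hherm : ∀ i j, S i j = S j i)
    (x : Fin p → ℝ) (v : Fin p) (c : ℝ) :
    (x + c • (Pi.single v 1 : Fin p → ℝ)) ⬝ᵥ (S *ᵥ (x + c • (Pi.single v 1 : Fin p → ℝ))) =
      x ⬝ᵥ (S *ᵥ x) + 2 * c * ((fun i => S i v) ⬝ᵥ x) + c ^ 2 * S v v := by
  have hsv : S *ᵥ (Pi.single v 1 : Fin p → ℝ) = fun i => S i v := by
    funext i
    simp [Matrix.mulVec_single]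
  have hsx : (Pi.single v 1 : Fin p → ℝ) ⬝ᵥ (S *ᵥ x) = (fun i => S i v) ⬝ᵥ x := by
    rw [single_dotProduct, one_mul]
    simp only [Matrix.mulVec, dotProduct]
    exact Finset.sum_congr rfl (fun j _ => by rw [hherm v j])
  have hxs : x ⬝ᵥ (fun i => S i v) = (fun i => S i v) ⬝ᵥ x := dotProduct_comm _ _
  have hvv : (Pi.single v 1 : Fin p → ℝ) ⬝ᵥ (fun i => S i v) = S v v := by
    rw [single_dotProduct, one_mul]
  rw [Matrix.mulVec_add, Matrix.mulVec_smul, dotProduct_add, add_dotProduct,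
    add_dotProduct, dotProduct_smul, dotProduct_smul,
    smul_dotProduct, smul_dotProduct, hsv, hsx, hxs, hvv]
  simp only [smul_eq_mul]
  ring

lemma psd_quad (S : Matrix (Fin p) (Fin p) ℝ) (hS : S.PosSemidef) (x : Fin p → ℝ) :
    0 ≤ x ⬝ᵥ (S *ᵥ x) := by
  have := hS.dotProduct_mulVec_nonneg x
  simpa using this

lemma psd_herm_apply (S : Matrix (Fin p) (Fin p) ℝ) (hS : S.PosSemidef) (i j : Fin p) :
    S i j = S j i := by
  have := congrFun (congrFun hS.1 i) j
  simpa [Matrix.conjTranspose_apply] using this.symm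

lemma psd_diag_nonneg (S : Matrix (Fin p) (Fin p) ℝ) (hS : S.PosSemidef) (v : Fin p) :
    0 ≤ S v v := by
  have h := psd_quad S hS (Pi.single v 1)
  have hsv : S *ᵥ (Pi.single v 1 : Fin p → ℝ) = fun i => S i v := by
    funext i
    simp [Matrix.mulVec_single]
  rw [hsv, single_dotProduct, one_mul] at h
  exact h

lemma psd_row_zero (S : Matrix (Fin p) (Fin p) ℝ) (hS : S.PosSemidef) (v : Fin p)
    (hv : S v v = 0) (i : Fin p) : S i v = 0 := by
  by_contra hne
  set c : ℝ := -(S i i + 1) / (2 * S i v) with hc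
  have key := quad_single S (psd_herm_apply S hS) (Pi.single i 1) v c
  have h1 : (fun j => S j v) ⬝ᵥ (Pi.single i 1 : Fin p → ℝ) = S i v := by
    rw [dotProduct_single, mul_one]
  have h2 : (Pi.single i 1 : Fin p → ℝ) ⬝ᵥ (S *ᵥ (Pi.single i 1 : Fin p → ℝ)) = S i i := by
    have hsv : S *ᵥ (Pi.single i 1 : Fin p → ℝ) = fun j => S j i := by
      funext j
      simp [Matrix.mulVec_single]
    rw [hsv, single_dotProduct, one_mul]
  rw [h1, h2, hv] at key
  have h3 : 2 * c * S i v = -(S i i + 1) := by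
    rw [hc]
    field_simp
  have h4 := psd_quad S hS (Pi.single i 1 + c • (Pi.single v 1 : Fin p → ℝ))
  rw [key, h3] at h4
  nlinarith
end MatrixLemmas

section Schur
open Matrix
variable {p : ℕ}

lemma herm_apply {n : Type*} (S : Matrix n n ℝ) (h : S.IsHermitian) (i j : n) :
    S i j = S j i := by
  have := congrFun (congrFun h i) j
  simpa [Matrix.conjTranspose_apply] using this.symm

lemma vecMulVec_quad (w x : Fin p → ℝ) :
    x ⬝ᵥ ((Matrix.vecMulVec w w) *ᵥ x) = (w ⬝ᵥ x) * (w ⬝ᵥ x) := by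
  have hMv : (Matrix.vecMulVec w w) *ᵥ x = fun i => w i * (w ⬝ᵥ x) := by
    funext i
    simp [Matrix.mulVec, Matrix.vecMulVec_apply, dotProduct, Finset.mul_sum, mul_assoc]
  rw [hMv]
  simp only [dotProduct, Finset.sum_mul]
  apply Finset.sum_congr rfl
  intro i _
  ring

lemma schur_step (S : Matrix (Fin p) (Fin p) ℝ) (hS : S.PosSemidef) (v : Fin p)
    (hv : S v v ≠ 0) :
    ((S v v)⁻¹ • Matrix.vecMulVec (fun i => S i v) (fun i => S i v)).PosSemidef ∧
    (S - (S v v)⁻¹ • Matrix.vecMulVec (fun i => S i v) (fun i => S i v)).PosSemidef := by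
  set a := S v v with ha
  set w : Fin p → ℝ := fun i => S i v with hw
  set M := a⁻¹ • Matrix.vecMulVec w w with hM
  have hanneg : 0 ≤ a := psd_diag_nonneg S hS v
  have hapos : 0 < a := lt_of_le_of_ne hanneg (Ne.symm hv)
  have hMherm : M.IsHermitian := by
    unfold Matrix.IsHermitian
    ext i j
    simp only [hM, Matrix.conjTranspose_apply, Matrix.smul_apply, Matrix.vecMulVec_apply,
      star_trivial, smul_eq_mul]
    ring
  have hMquad : ∀ x, x ⬝ᵥ (M *ᵥ x) = a⁻¹ * ((w ⬝ᵥ x) * (w ⬝ᵥ x)) := by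
    intro x
    rw [hM, Matrix.smul_mulVec, dotProduct_smul, vecMulVec_quad]
    simp
  have hMpsd : M.PosSemidef := by
    refine .of_dotProduct_mulVec_nonneg hMherm ?_
    intro x
    have : (star x : Fin p → ℝ) = x := by simp
    rw [this, hMquad]
    have := mul_self_nonneg (w ⬝ᵥ x)
    positivity
  refine ⟨hMpsd, .of_dotProduct_mulVec_nonneg (hS.1.sub hMherm) ?_⟩
  intro x
  have hstar : (star x : Fin p → ℝ) = x := by simp
  rw [hstar, Matrix.sub_mulVec, dotProduct_sub, hMquad]
  set X := x ⬝ᵥ (S *ᵥ x) with hX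
  set Wx := w ⬝ᵥ x with hWx
  set c : ℝ := -Wx / a with hc
  have hq := psd_quad S hS (x + c • (Pi.single v 1 : Fin p → ℝ))
  rw [quad_single S (psd_herm_apply S hS) x v c] at hq
  have hWx' : (fun i => S i v) ⬝ᵥ x = Wx := rfl
  rw [hWx'] at hq
  have heq : X + 2 * c * Wx + c ^ 2 * S v v = X - a⁻¹ * (Wx * Wx) := by
    rw [hc, ← ha]
    field_simp
    ring
  rw [heq] at hq
  exact hq
end Schur

section CliqueEmbed
open Matrix
variable {p : ℕ} (β : Finset (Fin p))

lemma cliqueEmbed_zero : cliqueEmbed β 0 = 0 := by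
  funext i j
  simp [cliqueEmbed]

lemma cliqueEmbed_add (X Y : Matrix {a // a ∈ β} {a // a ∈ β} ℝ) :
    cliqueEmbed β (X + Y) = cliqueEmbed β X + cliqueEmbed β Y := by
  funext i j
  simp only [cliqueEmbed, Matrix.add_apply]
  split_ifs <;> simp

lemma cliqueEmbed_mulVec (Y : Matrix {a // a ∈ β} {a // a ∈ β} ℝ) (x : Fin p → ℝ) :
    cliqueEmbed β Y *ᵥ x =
      fun i => if hi : i ∈ β then (Y *ᵥ (fun b => x b.1)) ⟨i, hi⟩ else 0 := by
  funext i
  by_cases hi : i ∈ β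
  · simp only [dif_pos hi, Matrix.mulVec, dotProduct, cliqueEmbed]
    set f : Fin p → ℝ := fun j => (if hj : j ∈ β then Y ⟨i, hi⟩ ⟨j, hj⟩ else 0) * x j with hf
    have h1 : ∑ j : Fin p, f j = ∑ j ∈ β, f j := by
      refine (Finset.sum_subset (Finset.subset_univ β) ?_).symm
      intro j _ hj
      simp [hf, dif_neg hj]
    have h2 : ∑ j ∈ β, f j = ∑ b ∈ β.attach, f b.1 := (Finset.sum_attach β f).symm
    rw [h1, h2, Finset.univ_eq_attach]
    apply Finset.sum_congr rfl
    intro b _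
    simp [hf, dif_pos b.2]
  · simp only [dif_neg hi, Matrix.mulVec, dotProduct, cliqueEmbed]
    apply Finset.sum_eq_zero
    intro j _
    simp [dif_neg hi]

lemma cliqueEmbed_quad (Y : Matrix {a // a ∈ β} {a // a ∈ β} ℝ) (x : Fin p → ℝ) :
    x ⬝ᵥ (cliqueEmbed β Y *ᵥ x) = (fun b => x b.1) ⬝ᵥ (Y *ᵥ (fun b => x b.1)) := by
  rw [cliqueEmbed_mulVec]
  simp only [dotProduct]
  set g : Fin p → ℝ :=
    fun j => x j * (if hj : j ∈ β then (Y *ᵥ (fun b => x b.1)) ⟨j, hj⟩ else 0) with hg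
  have h1 : ∑ j : Fin p, g j = ∑ j ∈ β, g j := by
    refine (Finset.sum_subset (Finset.subset_univ β) ?_).symm
    intro j _ hj
    simp [hg, dif_neg hj]
  have h2 : ∑ j ∈ β, g j = ∑ b ∈ β.attach, g b.1 := (Finset.sum_attach β g).symm
  rw [h1, h2, Finset.univ_eq_attach]
  apply Finset.sum_congr rfl
  intro b _
  simp [hg, dif_pos b.2]

lemma cliqueEmbed_psd (Y : Matrix {a // a ∈ β} {a // a ∈ β} ℝ) (hY : Y.PosSemidef) :
    (cliqueEmbed β Y).PosSemidef := by
  refine .of_dotProduct_mulVec_nonneg ?_ ?_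
  · unfold Matrix.IsHermitian
    ext i j
    simp only [Matrix.conjTranspose_apply, cliqueEmbed, star_trivial]
    split_ifs <;> first | exact herm_apply Y hY.1 _ _ | rfl
  · intro x
    have hstar : (star x : Fin p → ℝ) = x := by simp
    rw [hstar, cliqueEmbed_quad]
    have := hY.dotProduct_mulVec_nonneg (fun b => x b.1)
    simpa using this
end CliqueEmbed

open SimpleGraph in
lemma exists_maxclique {p : ℕ} (G : SimpleGraph (Fin p)) (s : Finset (Fin p))
    (hs : G.IsClique (s : Set (Fin p))) :
    ∃ t : Finset (Fin p), (G.IsClique (t : Set (Fin p)) ∧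
      ∀ t' : Finset (Fin p), G.IsClique (t' : Set (Fin p)) → t ⊆ t' → t = t') ∧ s ⊆ t := by
  classical
  set F := Finset.univ.powerset.filter
    (fun t : Finset (Fin p) => G.IsClique ((t : Finset (Fin p)) : Set (Fin p)) ∧ s ⊆ t) with hF
  have hFne : F.Nonempty := ⟨s, Finset.mem_filter.mpr
    ⟨Finset.mem_powerset.mpr (Finset.subset_univ s), hs, Finset.Subset.refl s⟩⟩
  obtain ⟨t, htF, hmax⟩ := F.exists_max_image Finset.card hFne
  rw [hF, Finset.mem_filter] at htF
  refine ⟨t, ⟨htF.2.1, ?_⟩, htF.2.2⟩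
  intro t' ht' hsub
  have ht'F : t' ∈ F := Finset.mem_filter.mpr
    ⟨Finset.mem_powerset.mpr (Finset.subset_univ t'), ht', htF.2.2.trans hsub⟩
  exact Finset.eq_of_subset_of_card_le hsub (hmax t' ht'F)

open SimpleGraph in
lemma decomp {p l : ℕ} (G : SimpleGraph (Fin p)) (hc : Chordal G)
    (β : Fin l → Finset (Fin p))
    (hext : ∀ s : Finset (Fin p), G.IsClique (s : Set (Fin p)) → ∃ k, s ⊆ β k) :
    ∀ (A : Finset (Fin p)) (S : Matrix (Fin p) (Fin p) ℝ), S.PosSemidef →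
      (∀ i j, S i j ≠ 0 → i ∈ A ∧ j ∈ A ∧ (i = j ∨ G.Adj i j)) →
      ∃ St : (k : Fin l) → Matrix {a // a ∈ β k} {a // a ∈ β k} ℝ,
        (∀ k, (St k).PosSemidef) ∧ S = ∑ k, cliqueEmbed (β k) (St k) := by
  classical
  intro A
  induction A using Finset.strongInductionOn with
  | _ A IH =>
  intro S hpsd hsupp
  rcases Finset.eq_empty_or_nonempty A with rfl | hne
  · have hS0 : S = 0 := by
      funext i j
      by_contra h
      exact absurd (hsupp i j h).1 (Finset.notMem_empty i)
    refine ⟨fun _ => 0, fun _ => Matrix.PosSemidef.zero, ?_⟩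
    rw [hS0]
    symm
    apply Finset.sum_eq_zero
    intro k _
    exact cliqueEmbed_zero (β k)
  · obtain ⟨⟨v, hvA, hvsimp⟩, _⟩ := dirac G hc A hne
    by_cases hvv : S v v = 0
    · have hrowzero : ∀ i, S i v = 0 := psd_row_zero S hpsd v hvv
      have hcolzero : ∀ j, S v j = 0 := fun j => (psd_herm_apply S hpsd v j).trans (hrowzero j)
      refine IH (A.erase v) (Finset.erase_ssubset hvA) S hpsd ?_
      intro i j hij
      obtain ⟨hiA, hjA, hadj⟩ := hsupp i j hij
      have hiv : i ≠ v := by rintro rfl; exact hij (hcolzero j)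
      have hjv : j ≠ v := by rintro rfl; exact hij (hrowzero i)
      exact ⟨Finset.mem_erase.mpr ⟨hiv, hiA⟩, Finset.mem_erase.mpr ⟨hjv, hjA⟩, hadj⟩
    · obtain ⟨hMpsd, hS'psd⟩ := schur_step S hpsd v hvv
      set w : Fin p → ℝ := fun i => S i v with hw
      set M := (S v v)⁻¹ • Matrix.vecMulVec w w with hM
      set S' := S - M with hS'
      have hMapply : ∀ i j, M i j = (S v v)⁻¹ * (w i * w j) := by
        intro i j
        simp [hM, Matrix.vecMulVec_apply]
      have hwpair : ∀ i j, M i j ≠ 0 → w i ≠ 0 ∧ w j ≠ 0 := by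
        intro i j hij
        constructor
        · intro h0; exact hij (by rw [hMapply, h0]; ring)
        · intro h0; exact hij (by rw [hMapply, h0]; ring)
      set C := insert v (A.filter (fun i => G.Adj i v)) with hC
      have hmemC : ∀ i, w i ≠ 0 → i ∈ C := by
        intro i hi
        obtain ⟨hiA, hvA', hadj⟩ := hsupp i v hi
        rcases hadj with rfl | hadj
        · exact Finset.mem_insert_self _ _
        · exact Finset.mem_insert.mpr (Or.inr (Finset.mem_filter.mpr ⟨hiA, hadj⟩))
      have hCsub : C ⊆ A := by
        intro z hz
        rcases Finset.mem_insert.mp hz with rfl | hz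
        · exact hvA
        · exact (Finset.mem_filter.mp hz).1
      have hCclique : G.IsClique (C : Set (Fin p)) := by
        intro z1 hz1 z2 hz2 hne12
        rw [Finset.mem_coe] at hz1 hz2
        rcases Finset.mem_insert.mp hz1 with rfl | hz1
        · rcases Finset.mem_insert.mp hz2 with rfl | hz2
          · exact absurd rfl hne12
          · exact ((Finset.mem_filter.mp hz2).2).symm
        · rcases Finset.mem_insert.mp hz2 with rfl | hz2
          · exact (Finset.mem_filter.mp hz1).2
          · obtain ⟨h1A, h1adj⟩ := Finset.mem_filter.mp hz1
            obtain ⟨h2A, h2adj⟩ := Finset.mem_filter.mp hz2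
            exact (hvsimp z1 z2 ⟨h1adj.symm, hvA, h1A⟩ ⟨h2adj.symm, hvA, h2A⟩ hne12).1
      obtain ⟨k0, hk0⟩ := hext C hCclique
      have hMC : ∀ i j, M i j ≠ 0 → i ∈ β k0 ∧ j ∈ β k0 := by
        intro i j hij
        obtain ⟨hwi, hwj⟩ := hwpair i j hij
        exact ⟨hk0 (hmemC i hwi), hk0 (hmemC j hwj)⟩
      set M0 : Matrix {a // a ∈ β k0} {a // a ∈ β k0} ℝ :=
        M.submatrix (fun b => b.1) (fun b => b.1) with hM0
      have hM0psd : M0.PosSemidef := hMpsd.submatrix _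
      have hMembed : cliqueEmbed (β k0) M0 = M := by
        funext i j
        by_cases hi : i ∈ β k0
        · by_cases hj : j ∈ β k0
          · simp [cliqueEmbed, dif_pos hi, dif_pos hj, hM0, Matrix.submatrix_apply]
          · simp only [cliqueEmbed, dif_pos hi, dif_neg hj]
            rcases eq_or_ne (M i j) 0 with h | h
            · exact h.symm
            · exact absurd (hMC i j h).2 hj
        · simp only [cliqueEmbed, dif_neg hi]
          rcases eq_or_ne (M i j) 0 with h | h
          · exact h.symm
          · exact absurd (hMC i j h).1 hi
      have hwv : w v = S v v := rfl
      have hS'row : ∀ j, S' v j = 0 := by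
        intro j
        have hMvj : M v j = w j := by
          rw [hMapply, hwv]
          field_simp
        have : S' v j = S v j - M v j := by simp [hS', Matrix.sub_apply]
        rw [this, hMvj]
        have : S v j = S j v := psd_herm_apply S hpsd v j
        rw [this]
        simp [hw]
      have hS'col : ∀ i, S' i v = 0 := by
        intro i
        have hMiv : M i v = w i := by
          rw [hMapply, hwv]
          field_simp
        have : S' i v = S i v - M i v := by simp [hS', Matrix.sub_apply]
        rw [this, hMiv]
        simp [hw]
      have hS'supp : ∀ i j, S' i j ≠ 0 →
          i ∈ A.erase v ∧ j ∈ A.erase v ∧ (i = j ∨ G.Adj i j) := by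
        intro i j hij
        have hiv : i ≠ v := fun h => hij (h ▸ hS'row j)
        have hjv : j ≠ v := fun h => hij (h ▸ hS'col i)
        have horig : S i j ≠ 0 ∨ M i j ≠ 0 := by
          by_contra hcon
          push_neg at hcon
          exact hij (by simp [hS', Matrix.sub_apply, hcon.1, hcon.2])
        rcases horig with h | h
        · obtain ⟨hiA, hjA, hadj⟩ := hsupp i j h
          exact ⟨Finset.mem_erase.mpr ⟨hiv, hiA⟩, Finset.mem_erase.mpr ⟨hjv, hjA⟩, hadj⟩
        · obtain ⟨hwi, hwj⟩ := hwpair i j h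
          have hiC : i ∈ C := hmemC i hwi
          have hjC : j ∈ C := hmemC j hwj
          refine ⟨Finset.mem_erase.mpr ⟨hiv, hCsub hiC⟩,
            Finset.mem_erase.mpr ⟨hjv, hCsub hjC⟩, ?_⟩
          rcases eq_or_ne i j with rfl | hije
          · exact Or.inl rfl
          · exact Or.inr (hCclique (Finset.mem_coe.mpr hiC) (Finset.mem_coe.mpr hjC) hije)
      obtain ⟨St', hSt'psd, hSt'sum⟩ :=
        IH (A.erase v) (Finset.erase_ssubset hvA) S' hS'psd hS'supp
      refine ⟨Function.update St' k0 (St' k0 + M0), ?_, ?_⟩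
      · intro k
        by_cases hk : k = k0
        · subst hk
          rw [Function.update_self]
          exact (hSt'psd k).add hM0psd
        · rw [Function.update_of_ne hk]
          exact hSt'psd k
      · have hsum : ∑ k, cliqueEmbed (β k) (Function.update St' k0 (St' k0 + M0) k)
            = ∑ k, (cliqueEmbed (β k) (St' k) +
              if k = k0 then cliqueEmbed (β k0) M0 else 0) := by
          apply Finset.sum_congr rfl
          intro k _
          by_cases hk : k = k0
          · subst hk
            rw [Function.update_self, cliqueEmbed_add, if_pos rfl]
          · rw [Function.update_of_ne hk, if_neg hk, add_zero]
        rw [hsum, Finset.sum_add_distrib, Finset.sum_ite_eq' Finset.univ k0,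
          if_pos (Finset.mem_univ k0), ← hSt'sum, hMembed]
        simp [hS']

lemma psd_sum {n : Type*} [Fintype n] {ι : Type*} (s : Finset ι)
    (f : ι → Matrix n n ℝ) (h : ∀ i ∈ s, (f i).PosSemidef) :
    (∑ i ∈ s, f i).PosSemidef := by
  classical
  induction s using Finset.cons_induction with
  | empty => simpa using Matrix.PosSemidef.zero
  | cons a s ha ih =>
    rw [Finset.sum_cons]
    exact (h a (Finset.mem_cons_self a s)).add
      (ih (fun i hi => h i (Finset.mem_cons.mpr (Or.inr hi))))


theorem stmt13 {p l : ℕ} (V : Set (Fin p × Fin p))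
    (hs : ∀ i j, (i, j) ∈ V → (j, i) ∈ V)
    (hdiag : ∀ i, (i, i) ∈ V)
    (hchordal : Chordal (spGraph V hs))
    (β : Fin l → Finset (Fin p))
    (hcliques : ∀ k, IsMaxClique (spGraph V hs) (β k))
    (hall : ∀ s : Finset (Fin p), IsMaxClique (spGraph V hs) s → ∃ k, s = β k) :
    {S : Matrix (Fin p) (Fin p) ℝ | S.PosSemidef ∧ ∀ i j, (i, j) ∉ V → S i j = 0}
    = {S : Matrix (Fin p) (Fin p) ℝ |
        ∃ St : (k : Fin l) → Matrix {a // a ∈ β k} {a // a ∈ β k} ℝ,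
          (∀ k, (St k).PosSemidef) ∧ S = ∑ k, cliqueEmbed (β k) (St k)} := by
  ext S
  simp only [Set.mem_setOf_eq]
  constructor
  · rintro ⟨hpsd, hzero⟩
    have hext : ∀ s : Finset (Fin p), (spGraph V hs).IsClique (s : Set (Fin p)) →
        ∃ k, s ⊆ β k := by
      intro s hsclique
      obtain ⟨t, htmax, hsub⟩ := exists_maxclique (spGraph V hs) s hsclique
      obtain ⟨k, hk⟩ := hall t ⟨htmax.1, htmax.2⟩
      exact ⟨k, hk ▸ hsub⟩
    refine decomp (spGraph V hs) hchordal β hext Finset.univ S hpsd ?_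
    intro i j hij
    refine ⟨Finset.mem_univ i, Finset.mem_univ j, ?_⟩
    rcases eq_or_ne i j with rfl | hne
    · exact Or.inl rfl
    · refine Or.inr ⟨hne, ?_⟩
      by_contra h
      exact hij (hzero i j h)
  · rintro ⟨St, hStpsd, rfl⟩
    constructor
    · exact psd_sum Finset.univ _ (fun k _ => cliqueEmbed_psd (β k) (St k) (hStpsd k))
    · intro i j hij
      simp only [Matrix.sum_apply]
      apply Finset.sum_eq_zero
      intro k _
      simp only [cliqueEmbed]
      by_cases hi : i ∈ β k
      · by_cases hj : j ∈ β k
        · exfalso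
          rcases eq_or_ne i j with rfl | hne
          · exact hij (hdiag i)
          · exact hij ((hcliques k).1 (Finset.mem_coe.mpr hi) (Finset.mem_coe.mpr hj) hne).2
        · rw [dif_pos hi, dif_neg hj]
      · rw [dif_neg hi]
end

section
/- Let V be a sparsity pattern of order p containing all diagonal entries. Then the cone S^p_{V,c+} of matrices in S^p_V having a positive semidefinite completion and the cone S^p_{V,+} of positive semidefinite matrices in S^p_V form a dual pair: for the trace inner product on S^p_V, (S^p_{V,+})^* = S^p_{V,c+} and (S^p_{V,c+})^* = S^p_{V,+}. -/
open Matrix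

open Matrix Filter Topology Set
open scoped Classical InnerProductSpace

namespace Stmt14Aux

variable {p : ℕ}

/-- Projection of a matrix onto the sparsity pattern `V`. -/
noncomputable def pV (V : Set (Fin p × Fin p)) (M : Matrix (Fin p) (Fin p) ℝ) :
    Matrix (Fin p) (Fin p) ℝ := Matrix.of fun i j => if (i, j) ∈ V then M i j else 0

/-- View a matrix as an element of the Euclidean space indexed by pairs. -/
def toE (M : Matrix (Fin p) (Fin p) ℝ) : EuclideanSpace ℝ (Fin p × Fin p) :=
  WithLp.toLp 2 (fun q : Fin p × Fin p => M q.1 q.2)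

lemma toE_apply (M : Matrix (Fin p) (Fin p) ℝ) (q : Fin p × Fin p) :
    toE M q = M q.1 q.2 := rfl

lemma inner_H (x y : EuclideanSpace ℝ (Fin p × Fin p)) :
    ⟪x, y⟫_ℝ = ∑ q : Fin p × Fin p, x q * y q := by
  simp [PiLp.inner_apply, RCLike.inner_apply, starRingEnd_apply]
  exact Finset.sum_congr rfl fun _ _ => mul_comm _ _

lemma trace_eq_sum {X Y : Matrix (Fin p) (Fin p) ℝ} (hY : Y.IsSymm) :
    (X * Y).trace = ∑ q : Fin p × Fin p, X q.1 q.2 * Y q.1 q.2 := by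
  rw [Matrix.trace, Fintype.sum_prod_type]
  refine Finset.sum_congr rfl fun i _ => ?_
  rw [Matrix.diag_apply, Matrix.mul_apply]
  exact Finset.sum_congr rfl fun j _ => by rw [hY.apply i j]

lemma diag_nonneg {Z : Matrix (Fin p) (Fin p) ℝ} (hZ : Z.PosSemidef) (i : Fin p) :
    0 ≤ Z i i := by
  have := hZ.dotProduct_mulVec_nonneg (Pi.single i 1)
  simpa [mulVec_single, dotProduct_single] using this

lemma trace_mul_nonneg {X Y : Matrix (Fin p) (Fin p) ℝ} (hX : X.PosSemidef)
    (hY : Y.PosSemidef) : 0 ≤ (X * Y).trace := by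
  open scoped MatrixOrder in
  obtain ⟨B, rfl⟩ := CStarAlgebra.nonneg_iff_eq_star_mul_self.mp hX.nonneg
  rw [star_eq_conjTranspose]
  rw [Matrix.mul_assoc, Matrix.trace_mul_comm]
  have hM : (B * Y * Bᴴ).PosSemidef := hY.mul_mul_conjTranspose_same B
  rw [Matrix.trace]
  exact Finset.sum_nonneg fun i _ => diag_nonneg hM i

lemma psd_symm {Z : Matrix (Fin p) (Fin p) ℝ} (hZ : Z.PosSemidef) (i j : Fin p) :
    Z j i = Z i j := by
  have := congrFun (congrFun hZ.1 i) j
  simpa [conjTranspose_apply] using this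

lemma isHermitian_of_isSymm {A : Matrix (Fin p) (Fin p) ℝ} (h : A.IsSymm) :
    A.IsHermitian := by
  unfold Matrix.IsHermitian
  ext i j
  rw [conjTranspose_apply, star_trivial, h.apply]

lemma star_eq_self (v : Fin p → ℝ) : star v = v := funext fun k => star_trivial _

lemma quad_pair (Z : Matrix (Fin p) (Fin p) ℝ) (c : ℝ) (i j : Fin p) :
    (fun k => (if k = i then (1:ℝ) else 0) + c * (if k = j then 1 else 0)) ⬝ᵥ
      Z *ᵥ (fun k => (if k = i then (1:ℝ) else 0) + c * (if k = j then 1 else 0))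
      = Z i i + c * Z i j + c * Z j i + c^2 * Z j j := by
  simp only [dotProduct, mulVec, mul_add, add_mul, mul_ite, ite_mul, mul_one, mul_zero,
    one_mul, zero_mul, Finset.sum_add_distrib, Finset.sum_ite_eq', Finset.mem_univ, if_true]
  ring

lemma entry_bound {Z : Matrix (Fin p) (Fin p) ℝ} (hZ : Z.PosSemidef) {M : ℝ}
    (hd : ∀ i, Z i i ≤ M) (i j : Fin p) : -M ≤ Z i j ∧ Z i j ≤ M := by
  have h0i := diag_nonneg hZ i
  have h0j := diag_nonneg hZ j
  have hsym := psd_symm hZ i j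
  have hq1 := hZ.dotProduct_mulVec_nonneg (fun k => (if k = i then (1:ℝ) else 0) + 1 * (if k = j then 1 else 0))
  have hq2 := hZ.dotProduct_mulVec_nonneg (fun k => (if k = i then (1:ℝ) else 0) + (-1) * (if k = j then 1 else 0))
  rw [star_eq_self, quad_pair] at hq1 hq2
  constructor <;> nlinarith [hd i, hd j]

lemma psd_smul {Z : Matrix (Fin p) (Fin p) ℝ} (hZ : Z.PosSemidef) {c : ℝ} (hc : 0 ≤ c) :
    (c • Z).PosSemidef := by
  refine PosSemidef.of_dotProduct_mulVec_nonneg ?_ ?_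
  · unfold Matrix.IsHermitian
    rw [conjTranspose_smul, star_trivial, hZ.1]
  · intro v
    have := hZ.dotProduct_mulVec_nonneg v
    rw [smul_mulVec, dotProduct_smul, smul_eq_mul]
    exact mul_nonneg hc this

/-- The cone of projections of p.s.d. matrices onto the pattern. -/
noncomputable def coneC (V : Set (Fin p × Fin p)) :
    ConvexCone ℝ (EuclideanSpace ℝ (Fin p × Fin p)) where
  carrier := {x | ∃ Z : Matrix (Fin p) (Fin p) ℝ, Z.PosSemidef ∧ x = toE (pV V Z)}
  smul_mem' := by
    rintro c hc x ⟨Z, hZ, rfl⟩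
    refine ⟨c • Z, psd_smul hZ hc.le, ?_⟩
    ext q
    show c * (if (q.1, q.2) ∈ V then Z q.1 q.2 else 0) = _
    by_cases h : (q.1, q.2) ∈ V <;>
      simp [toE, pV, h, Matrix.smul_apply, smul_eq_mul]
  add_mem' := by
    rintro x ⟨Z1, hZ1, rfl⟩ y ⟨Z2, hZ2, rfl⟩
    refine ⟨Z1 + Z2, hZ1.add hZ2, ?_⟩
    ext q
    show (if (q.1, q.2) ∈ V then Z1 q.1 q.2 else 0) + (if (q.1, q.2) ∈ V then Z2 q.1 q.2 else 0) = _
    by_cases h : (q.1, q.2) ∈ V <;> simp [toE, pV, h, Matrix.add_apply]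

lemma mem_coneC {V : Set (Fin p × Fin p)} {x : EuclideanSpace ℝ (Fin p × Fin p)} :
    x ∈ coneC V ↔ ∃ Z : Matrix (Fin p) (Fin p) ℝ, Z.PosSemidef ∧ x = toE (pV V Z) :=
  Iff.rfl

lemma coneC_nonempty (V : Set (Fin p × Fin p)) :
    ((coneC V : Set (EuclideanSpace ℝ (Fin p × Fin p)))).Nonempty := by
  refine ⟨toE (pV V 0), ⟨0, Matrix.PosSemidef.zero, rfl⟩⟩

lemma isClosed_coneC (V : Set (Fin p × Fin p))
    (hdiag : ∀ i, (i, i) ∈ V) :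
    IsClosed ((coneC V : Set (EuclideanSpace ℝ (Fin p × Fin p)))) := by
  refine isClosed_of_closure_subset fun x hx => ?_
  rw [mem_closure_iff_seq_limit] at hx
  obtain ⟨f, hfC, hfx⟩ := hx
  simp only [SetLike.mem_coe, mem_coneC] at hfC ⊢
  choose g hg hfg using hfC
  have hcoord : ∀ q : Fin p × Fin p, Tendsto (fun n => f n q) atTop (𝓝 (x q)) := by
    intro q
    exact ((EuclideanSpace.proj q).continuous.tendsto x).comp hfx
  have hfq : ∀ n q, f n q = if q ∈ V then g n q.1 q.2 else 0 := by
    intro n q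
    rw [hfg n]
    show (if (q.1, q.2) ∈ V then g n q.1 q.2 else 0) = _
    simp
  have hbdd : ∀ i : Fin p, ∃ R : ℝ, ∀ n, g n i i ≤ R := by
    intro i
    have ht : Tendsto (fun n => g n i i) atTop (𝓝 (x (i, i))) := by
      have := hcoord (i, i)
      simpa only [hfq, hdiag i, if_true] using this
    obtain ⟨R, hR⟩ := ht.bddAbove_range
    exact ⟨R, fun n => hR (mem_range_self n)⟩
  choose R hR using hbdd
  set M : ℝ := ∑ i : Fin p, |R i| with hMdef
  have hdle : ∀ n i, g n i i ≤ M := by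
    intro n i
    calc g n i i ≤ R i := hR i n
    _ ≤ |R i| := le_abs_self _
    _ ≤ M := Finset.single_le_sum (fun j _ => abs_nonneg (R j)) (Finset.mem_univ i)
  have hentry : ∀ n (q : Fin p × Fin p), g n q.1 q.2 ∈ Icc (-M) M := by
    intro n q
    obtain ⟨h1, h2⟩ := entry_bound (hg n) (hdle n) q.1 q.2
    exact ⟨h1, h2⟩
  set K : Set ((Fin p × Fin p) → ℝ) := Set.pi univ (fun _ => Icc (-M) M) with hKdef
  have hK : IsCompact K := isCompact_univ_pi fun _ => isCompact_Icc
  have hmem : ∀ n, (fun q : Fin p × Fin p => g n q.1 q.2) ∈ K := by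
    intro n
    exact fun q _ => hentry n q
  obtain ⟨z, hzK, φ, hφ, hconv⟩ := hK.tendsto_subseq hmem
  have hzc : ∀ q : Fin p × Fin p, Tendsto (fun n => g (φ n) q.1 q.2) atTop (𝓝 (z q)) :=
    fun q => (tendsto_pi_nhds.mp hconv q)
  set Z : Matrix (Fin p) (Fin p) ℝ := Matrix.of (fun i j => z (i, j)) with hZdef
  have hZpsd : Z.PosSemidef := by
    refine PosSemidef.of_dotProduct_mulVec_nonneg ?_ ?_
    · unfold Matrix.IsHermitian
      ext i j
      rw [conjTranspose_apply, star_trivial]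
      show z (j, i) = z (i, j)
      refine tendsto_nhds_unique ?_ (hzc (i, j))
      have := hzc (j, i)
      convert this using 2 with n
      exact (psd_symm (hg (φ n)) j i)
    · intro v
      rw [star_eq_self]
      show 0 ≤ v ⬝ᵥ Z *ᵥ v
      have htend : Tendsto (fun n => v ⬝ᵥ g (φ n) *ᵥ v) atTop (𝓝 (v ⬝ᵥ Z *ᵥ v)) := by
        simp only [dotProduct, mulVec]
        refine tendsto_finset_sum _ fun k _ => ?_
        exact ((tendsto_finset_sum _ fun l _ => (hzc (k, l)).mul_const (v l)).const_mul (v k))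
      refine ge_of_tendsto htend (Eventually.of_forall fun n => ?_)
      have := (hg (φ n)).dotProduct_mulVec_nonneg v
      rwa [star_eq_self] at this
  refine ⟨Z, hZpsd, ?_⟩
  ext q
  have h1 : Tendsto (fun n => f (φ n) q) atTop (𝓝 (x q)) :=
    (hcoord q).comp (hφ.tendsto_atTop)
  have h2 : Tendsto (fun n => f (φ n) q) atTop (𝓝 (toE (pV V Z) q)) := by
    have heq : ∀ n, f (φ n) q = if q ∈ V then g (φ n) q.1 q.2 else 0 := fun n => hfq (φ n) q
    simp only [heq]
    show Tendsto _ atTop (𝓝 (if (q.1, q.2) ∈ V then z (q.1, q.2) else 0))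
    by_cases h : q ∈ V
    · simp only [h, if_true, Prod.mk.eta]
      exact hzc q
    · simp only [Prod.mk.eta, h, if_false]
      exact tendsto_const_nhds
  exact tendsto_nhds_unique h1 h2

lemma dual_dual_coneC (V : Set (Fin p × Fin p)) (hdiag : ∀ i, (i, i) ∈ V)
    (y : EuclideanSpace ℝ (Fin p × Fin p))
    (h : ∀ W : EuclideanSpace ℝ (Fin p × Fin p),
      (∀ x ∈ (coneC V : Set (EuclideanSpace ℝ (Fin p × Fin p))), 0 ≤ ⟪x, W⟫_ℝ) →
        0 ≤ ⟪W, y⟫_ℝ) : y ∈ coneC V := by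
  let C : ProperCone ℝ (EuclideanSpace ℝ (Fin p × Fin p)) :=
    ⟨(coneC V).toPointedCone ⟨0, Matrix.PosSemidef.zero, by ext q; simp [toE, pV]⟩,
      isClosed_coneC V hdiag⟩
  by_contra hy
  obtain ⟨W, hW, hlt⟩ := ProperCone.hyperplane_separation' (x₀ := y) C hy
  have := h W hW
  rw [real_inner_comm] at this
  linarith

def Rone (v : Fin p → ℝ) : Matrix (Fin p) (Fin p) ℝ := Matrix.of fun i j => v i * v j

lemma Rone_psd (v : Fin p → ℝ) : (Rone v).PosSemidef := by
  refine PosSemidef.of_dotProduct_mulVec_nonneg ?_ ?_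
  · unfold Matrix.IsHermitian
    ext i j
    rw [conjTranspose_apply, star_trivial]
    show v j * v i = v i * v j
    ring
  · intro w
    rw [star_eq_self]
    show 0 ≤ w ⬝ᵥ Rone v *ᵥ w
    have : w ⬝ᵥ Rone v *ᵥ w = (∑ k, w k * v k) * (∑ l, v l * w l) := by
      simp only [dotProduct, mulVec, Rone, Matrix.of_apply]
      rw [Finset.sum_mul]
      refine Finset.sum_congr rfl fun k _ => ?_
      rw [Finset.mul_sum, Finset.mul_sum]
      exact Finset.sum_congr rfl fun l _ => by ring
    rw [this]
    have h2 : (∑ l, v l * w l) = ∑ k, w k * v k :=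
      Finset.sum_congr rfl fun k _ => mul_comm _ _
    rw [h2]
    exact mul_self_nonneg _

lemma sum_swap_V {V : Set (Fin p × Fin p)} (hs : ∀ i j, (i, j) ∈ V → (j, i) ∈ V)
    (F : Fin p × Fin p → ℝ) :
    (∑ q : Fin p × Fin p, if q ∈ V then F q.swap else 0)
      = ∑ q : Fin p × Fin p, if q ∈ V then F q else 0 := by
  refine Fintype.sum_equiv (Equiv.prodComm _ _) _ _ fun q => ?_
  obtain ⟨i, j⟩ := q
  have hiff : (i, j) ∈ V ↔ (j, i) ∈ V := ⟨hs i j, hs j i⟩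
  simp only [Equiv.prodComm_apply, Prod.swap]
  by_cases h : (i, j) ∈ V
  · rw [if_pos h]; exact (if_pos (hiff.mp h)).symm
  · rw [if_neg h]; exact (if_neg (fun hh => h (hiff.mpr hh))).symm

lemma trace_pV_rankOne {V : Set (Fin p × Fin p)} (hs : ∀ i j, (i, j) ∈ V → (j, i) ∈ V)
    {Y : Matrix (Fin p) (Fin p) ℝ} (hYv : ∀ i j, (i, j) ∉ V → Y i j = 0) (v : Fin p → ℝ) :
    (pV V (Rone v) * Y).trace = v ⬝ᵥ Y *ᵥ v := by
  rw [Matrix.trace]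
  simp only [Matrix.diag_apply, Matrix.mul_apply]
  have hterm : ∀ i j : Fin p, pV V (Rone v) i j * Y j i = v i * v j * Y j i := by
    intro i j
    show (if (i, j) ∈ V then v i * v j else 0) * Y j i = _
    by_cases h : (i, j) ∈ V
    · rw [if_pos h]
    · rw [if_neg h, zero_mul, hYv j i (fun hh => h (hs j i hh)), mul_zero]
  simp only [hterm]
  rw [dotProduct]
  rw [Finset.sum_comm]
  refine Finset.sum_congr rfl fun j _ => ?_
  rw [mulVec, dotProduct, Finset.mul_sum]
  refine Finset.sum_congr rfl fun i _ => by ring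

end Stmt14Aux

open Stmt14Aux

theorem stmt14 {p : ℕ} (V : Set (Fin p × Fin p))
    (hs : ∀ i j, (i, j) ∈ V → (j, i) ∈ V)
    (hdiag : ∀ i, (i, i) ∈ V) :
    -- the dual (within `S^p_V`, w.r.t. the trace inner product) of the sparse p.s.d. cone
    -- is the p.s.d.-completable cone, and conversely
    ({Y : Matrix (Fin p) (Fin p) ℝ |
        (Y.IsSymm ∧ ∀ i j, (i, j) ∉ V → Y i j = 0) ∧
        ∀ X : Matrix (Fin p) (Fin p) ℝ,
          (X.IsSymm ∧ ∀ i j, (i, j) ∉ V → X i j = 0) → X.PosSemidef →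
            0 ≤ (X * Y).trace}
      = {X : Matrix (Fin p) (Fin p) ℝ |
          (X.IsSymm ∧ ∀ i j, (i, j) ∉ V → X i j = 0) ∧
          ∃ Z : Matrix (Fin p) (Fin p) ℝ, Z.PosSemidef ∧
            ∀ i j, (i, j) ∈ V → Z i j = X i j}) ∧
    ({Y : Matrix (Fin p) (Fin p) ℝ |
        (Y.IsSymm ∧ ∀ i j, (i, j) ∉ V → Y i j = 0) ∧
        ∀ X : Matrix (Fin p) (Fin p) ℝ,
          (X.IsSymm ∧ ∀ i j, (i, j) ∉ V → X i j = 0) →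
          (∃ Z : Matrix (Fin p) (Fin p) ℝ, Z.PosSemidef ∧
            ∀ i j, (i, j) ∈ V → Z i j = X i j) →
            0 ≤ (X * Y).trace}
      = {X : Matrix (Fin p) (Fin p) ℝ |
          (X.IsSymm ∧ ∀ i j, (i, j) ∉ V → X i j = 0) ∧ X.PosSemidef}) := by
  constructor
  · -- first equality
    ext Y
    simp only [Set.mem_setOf_eq]
    constructor
    · rintro ⟨⟨hYs, hYv⟩, hdual⟩
      refine ⟨⟨hYs, hYv⟩, ?_⟩
      have hbid := dual_dual_coneC V hdiag (toE Y)
      have hmem : ∀ W : EuclideanSpace ℝ (Fin p × Fin p),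
          (∀ x ∈ (coneC V : Set (EuclideanSpace ℝ (Fin p × Fin p))), 0 ≤ ⟪x, W⟫_ℝ) →
            0 ≤ ⟪W, toE Y⟫_ℝ := by
        intro W hW
        set A : Matrix (Fin p) (Fin p) ℝ :=
          Matrix.of (fun i j => if (i, j) ∈ V then (W (i, j) + W (j, i)) / 2 else 0) with hAdef
        have hA_apply : ∀ i j, A i j = if (i, j) ∈ V then (W (i, j) + W (j, i)) / 2 else 0 :=
          fun i j => rfl
        have hAsymm : A.IsSymm := by
          refine Matrix.IsSymm.ext fun i j => ?_
          rw [hA_apply, hA_apply]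
          by_cases h : (i, j) ∈ V
          · rw [if_pos (hs i j h), if_pos h, add_comm]
          · rw [if_neg (fun hh => h (hs j i hh)), if_neg h]
        have hAsparse : ∀ i j, (i, j) ∉ V → A i j = 0 := fun i j h => by
          rw [hA_apply, if_neg h]
        have hkey : ∀ v : Fin p → ℝ,
            v ⬝ᵥ A *ᵥ v
              = ∑ q : Fin p × Fin p, (if q ∈ V then v q.1 * v q.2 * W q else 0) := by
          intro v
          have e1 : v ⬝ᵥ A *ᵥ v = ∑ q : Fin p × Fin p, v q.1 * (A q.1 q.2 * v q.2) := by
            rw [dotProduct, Fintype.sum_prod_type]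
            refine Finset.sum_congr rfl fun k _ => ?_
            rw [mulVec, dotProduct, Finset.mul_sum]
          rw [e1]
          have e2 : ∀ q : Fin p × Fin p, v q.1 * (A q.1 q.2 * v q.2)
              = ((if q ∈ V then v q.1 * v q.2 * W q else 0)
                + (if q ∈ V then v q.1 * v q.2 * W q.swap else 0)) / 2 := by
            intro q
            rw [hA_apply]
            by_cases h : q ∈ V
            · have h' : (q.1, q.2) ∈ V := by simpa using h
              rw [if_pos h', if_pos h, if_pos h]
              have hq1 : W (q.1, q.2) = W q := by simp
              have hq2 : W (q.2, q.1) = W q.swap := rfl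
              rw [hq1, hq2]; ring
            · have h' : (q.1, q.2) ∉ V := by simpa using h
              rw [if_neg h', if_neg h, if_neg h]; ring
          simp only [e2]
          rw [← Finset.sum_div, Finset.sum_add_distrib]
          have e3 : (∑ q : Fin p × Fin p, if q ∈ V then v q.1 * v q.2 * W q.swap else 0)
              = ∑ q : Fin p × Fin p, if q ∈ V then v q.1 * v q.2 * W q else 0 := by
            rw [← sum_swap_V hs (fun q => v q.1 * v q.2 * W q)]
            refine Finset.sum_congr rfl fun q _ => ?_
            by_cases h : q ∈ V
            · rw [if_pos h, if_pos h]
              show v q.1 * v q.2 * W q.swap = v q.swap.1 * v q.swap.2 * W q.swap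
              obtain ⟨i, j⟩ := q
              show v i * v j * _ = v j * v i * _
              ring
            · rw [if_neg h, if_neg h]
          rw [e3]
          ring
        have hApsd : A.PosSemidef := by
          refine PosSemidef.of_dotProduct_mulVec_nonneg (isHermitian_of_isSymm hAsymm) fun v => ?_
          rw [star_eq_self]
          show (0:ℝ) ≤ v ⬝ᵥ A *ᵥ v
          rw [hkey]
          have hx : toE (pV V (Rone v)) ∈
              (coneC V : Set (EuclideanSpace ℝ (Fin p × Fin p))) :=
            ⟨Rone v, Rone_psd v, rfl⟩
          have hWx := hW _ hx
          rw [inner_H] at hWx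
          refine le_of_le_of_eq hWx (Finset.sum_congr rfl fun q _ => ?_)
          show toE (pV V (Rone v)) q * W q = _
          rw [toE_apply]
          show (if (q.1, q.2) ∈ V then v q.1 * v q.2 else 0) * W q = _
          by_cases h : q ∈ V
          · rw [if_pos (show (q.1, q.2) ∈ V by simpa using h), if_pos h]
          · rw [if_neg (show (q.1, q.2) ∉ V by simpa using h), if_neg h, zero_mul]
        have h0 := hdual A ⟨hAsymm, hAsparse⟩ hApsd
        rw [inner_H]
        have t1 : (∑ q : Fin p × Fin p, W q * toE Y q)
            = ∑ q : Fin p × Fin p, (if q ∈ V then W q * Y q.1 q.2 else 0) := by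
          refine Finset.sum_congr rfl fun q _ => ?_
          rw [toE_apply]
          by_cases h : q ∈ V
          · rw [if_pos h]
          · rw [if_neg h, hYv q.1 q.2 (by simpa using h), mul_zero]
        have t2 : (A * Y).trace
            = ∑ q : Fin p × Fin p, (if q ∈ V then W q * Y q.1 q.2 else 0) := by
          rw [trace_eq_sum hYs]
          have e2 : ∀ q : Fin p × Fin p, A q.1 q.2 * Y q.1 q.2
              = ((if q ∈ V then W q * Y q.1 q.2 else 0)
                + (if q ∈ V then W q.swap * Y q.1 q.2 else 0)) / 2 := by
            intro q
            rw [hA_apply]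
            by_cases h : q ∈ V
            · have h' : (q.1, q.2) ∈ V := by simpa using h
              rw [if_pos h', if_pos h, if_pos h]
              have hq1 : W (q.1, q.2) = W q := by simp
              have hq2 : W (q.2, q.1) = W q.swap := rfl
              rw [hq1, hq2]; ring
            · have h' : (q.1, q.2) ∉ V := by simpa using h
              rw [if_neg h', if_neg h, if_neg h]; ring
          simp only [e2]
          rw [← Finset.sum_div, Finset.sum_add_distrib]
          have e3 : (∑ q : Fin p × Fin p, if q ∈ V then W q.swap * Y q.1 q.2 else 0)
              = ∑ q : Fin p × Fin p, if q ∈ V then W q * Y q.1 q.2 else 0 := by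
            rw [← sum_swap_V hs (fun q => W q * Y q.1 q.2)]
            refine Finset.sum_congr rfl fun q _ => ?_
            by_cases h : q ∈ V
            · rw [if_pos h, if_pos h]
              show W q.swap * Y q.1 q.2 = W q.swap * Y q.swap.1 q.swap.2
              obtain ⟨i, j⟩ := q
              show W _ * Y i j = W _ * Y j i
              rw [hYs.apply i j]
            · rw [if_neg h, if_neg h]
          rw [e3]
          ring
        rw [t1, ← t2]
        exact h0
      replace hmem := hbid hmem
      obtain ⟨Z, hZ, hxz⟩ := mem_coneC.mp hmem
      refine ⟨Z, hZ, fun i j hij => ?_⟩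
      have hc : toE Y (i, j) = toE (pV V Z) (i, j) := by rw [hxz]
      rw [toE_apply] at hc
      have : Y i j = if (i, j) ∈ V then Z i j else 0 := hc
      rw [if_pos hij] at this
      exact this.symm
    · rintro ⟨⟨hYs, hYv⟩, Z, hZ, hZV⟩
      refine ⟨⟨hYs, hYv⟩, fun X ⟨hXs, hXv⟩ hXpsd => ?_⟩
      have hZs : Z.IsSymm := Matrix.IsSymm.ext fun i j => psd_symm hZ i j
      have he : (X * Y).trace = (X * Z).trace := by
        rw [trace_eq_sum hYs, trace_eq_sum hZs]
        refine Finset.sum_congr rfl fun q _ => ?_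
        by_cases h : q ∈ V
        · rw [hZV q.1 q.2 (by simpa using h)]
        · rw [hXv q.1 q.2 (by simpa using h), zero_mul, zero_mul]
      rw [he]
      exact trace_mul_nonneg hXpsd hZ
  · -- second equality
    ext Y
    simp only [Set.mem_setOf_eq]
    constructor
    · rintro ⟨⟨hYs, hYv⟩, hdual⟩
      refine ⟨⟨hYs, hYv⟩, .of_dotProduct_mulVec_nonneg (isHermitian_of_isSymm hYs) fun v => ?_⟩
      rw [star_eq_self]
      show (0:ℝ) ≤ v ⬝ᵥ Y *ᵥ v
      have hXsymm : (pV V (Rone v)).IsSymm := by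
        refine Matrix.IsSymm.ext fun i j => ?_
        show (if (j, i) ∈ V then v j * v i else 0) = (if (i, j) ∈ V then v i * v j else 0)
        by_cases h : (i, j) ∈ V
        · rw [if_pos (hs i j h), if_pos h, mul_comm]
        · rw [if_neg (fun hh => h (hs j i hh)), if_neg h]
      have hXsp : ∀ i j, (i, j) ∉ V → pV V (Rone v) i j = 0 := fun i j h => by
        show (if (i, j) ∈ V then v i * v j else 0) = 0
        rw [if_neg h]
      have hcomp : ∃ Z : Matrix (Fin p) (Fin p) ℝ, Z.PosSemidef ∧
          ∀ i j, (i, j) ∈ V → Z i j = pV V (Rone v) i j := by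
        refine ⟨Rone v, Rone_psd v, fun i j h => ?_⟩
        show Rone v i j = (if (i, j) ∈ V then v i * v j else 0)
        rw [if_pos h]; rfl
      have := hdual (pV V (Rone v)) ⟨hXsymm, hXsp⟩ hcomp
      rwa [trace_pV_rankOne hs hYv v] at this
    · rintro ⟨⟨hYs, hYv⟩, hYpsd⟩
      refine ⟨⟨hYs, hYv⟩, ?_⟩
      rintro X ⟨hXs, hXv⟩ ⟨Z, hZ, hZV⟩
      have he : (X * Y).trace = (Z * Y).trace := by
        rw [trace_eq_sum hYs, trace_eq_sum hYs]
        refine Finset.sum_congr rfl fun q _ => ?_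
        by_cases h : q ∈ V
        · rw [hZV q.1 q.2 (by simpa using h)]
        · rw [hYv q.1 q.2 (by simpa using h), mul_zero, mul_zero]
      rw [he]
      exact trace_mul_nonneg hZ hYpsd
end
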